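/- arXiv:2406.17506 — 8 statements merged into one kernel-verified Lean document; each statement's English description precedes it below -/
import Mathlib

section
/- Let L > 0, μ ∈ (−∞, 0], κ := μ/L, and let f : E → ℝ be a differentiable function on a real inner product space E with f ∈ F_{μ,L} and f_* := inf_x f(x) > −∞. Set γ̄₁ := 3/(1 + κ + √(1 − κ + κ²)) (which lies in [3/2, 2)). Fix an integer N ≥ 1 and stepsizes γ_0,…,γ_{N−1} > 0 with γ_i L ∈ (0, γ̄₁] for every i, and let x_{i+1} = x_i − γ_i ∇f(x_i). Then (1/(2L)) · min_{0≤i≤N} ‖∇f(x_i)‖² ≤ (f(x_0) − f_*) / ( 1 + Σ_{i=0}^{N−1} γ_i L · p(γ_i L, γ_i μ) ). -/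
open Set RealInnerProductSpace


/-- The coefficient `p(l,u) := 2 − (−l·u)/((1−u) − |1−l|)` from the nonconvex rates. -/
noncomputable def pcoef (l u : ℝ) : ℝ := 2 - -(l * u) / ((1 - u) - |1 - l|)



lemma convexOn_first_order {E : Type*} [NormedAddCommGroup E] [InnerProductSpace ℝ E]
    {g : E → ℝ} (hg : ConvexOn ℝ Set.univ g) (hd : Differentiable ℝ g) (x y : E) :
    g x + fderiv ℝ g x (y - x) ≤ g y := by
  set φ : ℝ → ℝ := fun t => g (x + t • (y - x)) with hφ
  have hconv : ConvexOn ℝ Set.univ φ := by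
    have h := hg.comp_affineMap (AffineMap.lineMap x y : ℝ →ᵃ[ℝ] E)
    have he : φ = g ∘ (AffineMap.lineMap x y : ℝ →ᵃ[ℝ] E) := by
      funext t
      simp [hφ, AffineMap.lineMap_apply, add_comm]
    rw [he]
    simpa using h
  have hder : HasDerivAt φ (fderiv ℝ g x (y - x)) 0 := by
    have hc : HasDerivAt (fun t : ℝ => x + t • (y - x)) (y - x) 0 := by
      simpa using ((hasDerivAt_id (0:ℝ)).smul_const (y - x)).const_add x
    have h2 := (hd (x + (0:ℝ) • (y - x))).hasFDerivAt.comp_hasDerivAt 0 hc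
    simp only [zero_smul, add_zero] at h2
    exact h2
  have hs := hconv.le_slope_of_hasDerivAt (Set.mem_univ 0) (Set.mem_univ 1) one_pos hder
  have : slope φ 0 1 = g y - g x := by
    simp [slope_def_field, hφ]
  rw [this] at hs
  linarith

section Interp

variable {E : Type*} [NormedAddCommGroup E] [InnerProductSpace ℝ E] [CompleteSpace E]
  (L μ : ℝ) (f : E → ℝ)

/-- Descent-type upper bound from convexity of `L/2‖·‖² - f`. -/
lemma descent_ub (hdiff : Differentiable ℝ f)
    (hsmooth : ConvexOn ℝ Set.univ (fun z => L / 2 * ‖z‖ ^ 2 - f z)) (x y : E) :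
    f y ≤ f x + ⟪gradient f x, y - x⟫ + L / 2 * ‖y - x‖ ^ 2 := by
  have hf' : HasFDerivAt f (InnerProductSpace.toDual ℝ E (gradient f x)) x :=
    hasGradientAt_iff_hasFDerivAt.mp (hdiff x).hasGradientAt
  have hdq : Differentiable ℝ (fun z : E => L / 2 * ‖z‖ ^ 2 - f z) := by
    have : Differentiable ℝ (fun z : E => ‖z‖ ^ 2) := differentiable_id.norm_sq (𝕜 := ℝ)
    exact (this.const_mul (L/2)).sub hdiff
  have hFD : HasFDerivAt (fun z : E => L / 2 * ‖z‖ ^ 2 - f z)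
      ((L/2) • (2 • (innerSL ℝ x)) - InnerProductSpace.toDual ℝ E (gradient f x)) x :=
    (((hasStrictFDerivAt_norm_sq x).hasFDerivAt).const_mul (L/2)).sub hf'
  have h := convexOn_first_order hsmooth hdq x y
  rw [hFD.fderiv] at h
  simp only [ContinuousLinearMap.sub_apply, ContinuousLinearMap.smul_apply, innerSL_apply_apply,
    InnerProductSpace.toDual_apply_apply, smul_eq_mul, nsmul_eq_mul] at h
  have e1 : ⟪x, y - x⟫ = ⟪x, y⟫ - ‖x‖ ^ 2 := by
    rw [inner_sub_right, real_inner_self_eq_norm_sq]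
  have e2 : ‖y - x‖ ^ 2 = ‖y‖ ^ 2 - 2 * ⟪x, y⟫ + ‖x‖ ^ 2 := by
    rw [norm_sub_sq_real, real_inner_comm]
  rw [e1] at h
  rw [e2]
  nlinarith [h]

/-- Lower bound from convexity of `f - μ/2‖·‖²`. -/
lemma curv_lb (hdiff : Differentiable ℝ f)
    (hcurv : ConvexOn ℝ Set.univ (fun z => f z - μ / 2 * ‖z‖ ^ 2)) (x y : E) :
    f x + ⟪gradient f x, y - x⟫ + μ / 2 * ‖y - x‖ ^ 2 ≤ f y := by
  have hf' : HasFDerivAt f (InnerProductSpace.toDual ℝ E (gradient f x)) x :=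
    hasGradientAt_iff_hasFDerivAt.mp (hdiff x).hasGradientAt
  have hdq : Differentiable ℝ (fun z : E => f z - μ / 2 * ‖z‖ ^ 2) := by
    have : Differentiable ℝ (fun z : E => ‖z‖ ^ 2) := differentiable_id.norm_sq (𝕜 := ℝ)
    exact hdiff.sub (this.const_mul (μ/2))
  have hFD : HasFDerivAt (fun z : E => f z - μ / 2 * ‖z‖ ^ 2)
      (InnerProductSpace.toDual ℝ E (gradient f x) - (μ/2) • (2 • (innerSL ℝ x))) x :=
    hf'.sub (((hasStrictFDerivAt_norm_sq x).hasFDerivAt).const_mul (μ/2))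
  have h := convexOn_first_order hcurv hdq x y
  rw [hFD.fderiv] at h
  simp only [ContinuousLinearMap.sub_apply, ContinuousLinearMap.smul_apply, innerSL_apply_apply,
    InnerProductSpace.toDual_apply_apply, smul_eq_mul, nsmul_eq_mul] at h
  have e1 : ⟪x, y - x⟫ = ⟪x, y⟫ - ‖x‖ ^ 2 := by
    rw [inner_sub_right, real_inner_self_eq_norm_sq]
  have e2 : ‖y - x‖ ^ 2 = ‖y‖ ^ 2 - 2 * ⟪x, y⟫ + ‖x‖ ^ 2 := by
    rw [norm_sub_sq_real, real_inner_comm]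
  rw [e1] at h
  rw [e2]
  nlinarith [h]

/-- Two-point interpolation inequality for `F_{μ,L}`. -/
lemma interp_ineq (hLμ : μ < L) (hdiff : Differentiable ℝ f)
    (hsmooth : ConvexOn ℝ Set.univ (fun z => L / 2 * ‖z‖ ^ 2 - f z))
    (hcurv : ConvexOn ℝ Set.univ (fun z => f z - μ / 2 * ‖z‖ ^ 2)) (x y : E) :
    f x + ⟪gradient f x, y - x⟫ + μ / 2 * ‖y - x‖ ^ 2
      + 1 / (2 * (L - μ)) * ‖gradient f y - gradient f x - μ • (y - x)‖ ^ 2 ≤ f y := by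
  set a := gradient f x with ha
  set b := gradient f y with hb
  set v := y - x with hv
  set d := b - a - μ • v with hd
  have hLμ' : 0 < L - μ := by linarith
  set c : ℝ := 1 / (L - μ) with hc
  have hcpos : 0 < c := by positivity
  have hcL : (L - μ) * c = 1 := by rw [hc, mul_one_div, div_self hLμ'.ne']
  set z := y - c • d with hz
  -- (1)  f x + ⟪a, z - x⟫ + μ/2 ‖z - x‖² ≤ f z
  have h1 := curv_lb μ f hdiff hcurv x z
  -- (2)  f z ≤ f y + ⟪b, z - y⟫ + L/2 ‖z - y‖²
  have h2 := descent_ub L f hdiff hsmooth y z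
  rw [← ha] at h1
  rw [← hb] at h2
  have hzx : z - x = v - c • d := by rw [hz, hv]; abel
  have hzy : z - y = -(c • d) := by rw [hz]; abel
  -- scalar expansions
  have e1 : ⟪a, z - x⟫ = ⟪a, v⟫ - c * ⟪a, d⟫ := by
    rw [hzx, inner_sub_right, real_inner_smul_right]
  have e2 : ‖z - x‖ ^ 2 = ‖v‖ ^ 2 - 2 * (c * ⟪v, d⟫) + c ^ 2 * ‖d‖ ^ 2 := by
    rw [hzx, norm_sub_sq_real, real_inner_smul_right, norm_smul]
    rw [mul_pow]
    simp [abs_of_pos hcpos]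
  have e3 : ⟪b, z - y⟫ = -(c * ⟪b, d⟫) := by
    rw [hzy, inner_neg_right, real_inner_smul_right]
  have e4 : ‖z - y‖ ^ 2 = c ^ 2 * ‖d‖ ^ 2 := by
    rw [hzy, norm_neg, norm_smul, mul_pow]
    simp [abs_of_pos hcpos]
  have e5 : ⟪b, d⟫ - ⟪a, d⟫ - μ * ⟪v, d⟫ = ‖d‖ ^ 2 := by
    rw [← real_inner_self_eq_norm_sq]
    conv_rhs => rw [hd, inner_sub_left, inner_sub_left, real_inner_smul_left]
  rw [e1, e2] at h1
  rw [e3, e4] at h2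
  have hfin : f x + ⟪a, v⟫ + μ / 2 * ‖v‖ ^ 2
      + (c * (⟪b, d⟫ - ⟪a, d⟫ - μ * ⟪v, d⟫) - (L - μ) * c ^ 2 / 2 * ‖d‖ ^ 2) ≤ f y := by
    nlinarith [h1, h2]
  rw [e5] at hfin
  have hcc : c * ‖d‖ ^ 2 - (L - μ) * c ^ 2 / 2 * ‖d‖ ^ 2 = 1 / (2 * (L - μ)) * ‖d‖ ^ 2 := by
    rw [show 1 / (2 * (L - μ)) = c / 2 by rw [hc, div_div, mul_comm]]
    linear_combination (-(c * ‖d‖ ^ 2 / 2)) * hcL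
  nlinarith [hfin, hcc]

end Interp

lemma scalar_step (L μ γ X Y s D m : ℝ) (hL : 0 < L) (hμ : μ ≤ 0) (hγ : 0 < γ)
    (hl2 : γ * L < 2)
    (hsq : (γ*L)^2 - (γ*L)*(γ*μ) + (γ*μ)^2 ≤ (3 - γ*L - γ*μ)^2)
    (hm0 : 0 ≤ m) (hmX : m ≤ X) (hmY : m ≤ Y) (hs : 2*s ≤ X + Y)
    (hQ2 : γ*s + μ/2*(γ^2*X) + 1/(2*(L-μ))*(Y - 2*(1-γ*μ)*s + (1-γ*μ)^2*X) ≤ D)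
    (hQ1 : -(γ*X) + μ/2*(γ^2*X) + 1/(2*(L-μ))*(Y - 2*(1-γ*μ)*s + (1-γ*μ)^2*X) ≤ -D) :
    γ * pcoef (γ*L) (γ*μ) / 2 * m ≤ D := by
  have hLμ : 0 < L - μ := by linarith
  have hR2 : (0:ℝ) < 2*(L-μ) := by linarith
  have hu : γ*μ ≤ 0 := by nlinarith
  have hl0 : 0 < γ*L := mul_pos hγ hL
  have hlu : 0 < γ*L - γ*μ := by linarith
  have hE : 1/(2*(L-μ)) * (Y - 2*(1-γ*μ)*s + (1-γ*μ)^2*X) * (2*(L-μ))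
      = (Y - 2*(1-γ*μ)*s + (1-γ*μ)^2*X) := by field_simp
  have hP2 : (γ*s + μ/2*(γ^2*X))*(2*(L-μ)) + (Y - 2*(1-γ*μ)*s + (1-γ*μ)^2*X)
      ≤ D*(2*(L-μ)) := by
    have h := mul_le_mul_of_nonneg_right hQ2 hR2.le
    linarith [h, hE]
  have hP1 : (-(γ*X) + μ/2*(γ^2*X))*(2*(L-μ)) + (Y - 2*(1-γ*μ)*s + (1-γ*μ)^2*X)
      ≤ (-D)*(2*(L-μ)) := by
    have h := mul_le_mul_of_nonneg_right hQ1 hR2.le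
    linarith [h, hE]
  rcases le_total (γ*L) 1 with hcase | hcase
  · -- small stepsize:  γL ≤ 1
    have habs : |1 - γ*L| = 1 - γ*L := abs_of_nonneg (by linarith)
    have hpc : pcoef (γ*L) (γ*μ) = 2 + (γ*L)*(γ*μ)/(γ*L - γ*μ) := by
      simp only [pcoef, habs]
      rw [show (1 - γ*μ) - (1 - γ*L) = γ*L - γ*μ by ring, neg_div]
      ring
    have hcoefX : 0 ≤ γ*L + (γ*L)*(γ*μ) - 2*(γ*μ) := by
      linarith [mul_nonneg (neg_nonneg.mpr hu) (by linarith : (0:ℝ) ≤ 2 - γ*L)]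
    have h1 : (γ*L + (γ*L)*(γ*μ) - 2*(γ*μ))*m ≤ (γ*L + (γ*L)*(γ*μ) - 2*(γ*μ))*X :=
      mul_le_mul_of_nonneg_left hmX hcoefX
    have h2 : (γ*L)*m ≤ (γ*L)*Y := mul_le_mul_of_nonneg_left hmY hl0.le
    have h3 : 0 ≤ (1 - γ*L)*(X + Y - 2*s) := mul_nonneg (by linarith) (by linarith)
    have h4 : (2*(γ*L) - 2*(γ*μ) + (γ*L)*(γ*μ))*m ≤ 2*(L-μ)*D := by linarith [hP2, h1, h2, h3]
    have h5 := mul_le_mul_of_nonneg_left h4 hγ.le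
    have hE2 : γ * (2 + (γ*L)*(γ*μ)/(γ*L - γ*μ)) / 2 * m
        = γ*((2*(γ*L) - 2*(γ*μ) + (γ*L)*(γ*μ))*m) / (2*(γ*L-γ*μ)) := by
      rw [eq_div_iff (by linarith : 2*(γ*L-γ*μ) ≠ 0)]
      field_simp
    rw [hpc, hE2, div_le_iff₀ (by linarith : (0:ℝ) < 2*(γ*L-γ*μ))]
    linarith [h5]
  · -- large stepsize:  1 ≤ γL
    have habs : |1 - γ*L| = γ*L - 1 := by rw [abs_of_nonpos (by linarith)]; ring
    have he : 0 < 2 - γ*L - γ*μ := by linarith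
    have hpc : pcoef (γ*L) (γ*μ) = 2 + (γ*L)*(γ*μ)/(2 - γ*L - γ*μ) := by
      simp only [pcoef, habs]
      rw [show (1 - γ*μ) - (γ*L - 1) = 2 - γ*L - γ*μ by ring, neg_div]
      ring
    have hCX : 0 ≤ 3 - 2*(γ*L) - 2*(γ*μ) + (γ*L)*(γ*μ) := by linarith [hsq]
    have h1 : ((γ*L - γ*μ)*(3 - 2*(γ*L) - 2*(γ*μ) + (γ*L)*(γ*μ)))*m
        ≤ ((γ*L - γ*μ)*(3 - 2*(γ*L) - 2*(γ*μ) + (γ*L)*(γ*μ)))*X :=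
      mul_le_mul_of_nonneg_left hmX (mul_nonneg hlu.le hCX)
    have h2 : (γ*L - γ*μ)*m ≤ (γ*L - γ*μ)*Y := mul_le_mul_of_nonneg_left hmY hlu.le
    have h6 := mul_le_mul_of_nonneg_left hP2 he.le
    have h7 : 0 ≤ γ*L - 1 := by linarith
    have h8 := mul_le_mul_of_nonneg_left (add_le_add hP2 hP1) h7
    have h9 : (γ*L-γ*μ)*(4 - 2*(γ*L) - 2*(γ*μ) + (γ*L)*(γ*μ))*m
        ≤ (2 - γ*L - γ*μ)*(2*(L-μ))*D := by linarith [h6, h8, h1, h2]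
    have hE2 : γ * (2 + (γ*L)*(γ*μ)/(2 - γ*L - γ*μ)) / 2 * m
        = (γ*L-γ*μ)*(4 - 2*(γ*L) - 2*(γ*μ) + (γ*L)*(γ*μ))*m / ((2 - γ*L - γ*μ)*(2*(L-μ))) := by
      rw [eq_div_iff (by positivity : (2 - γ*L - γ*μ)*(2*(L-μ)) ≠ 0)]
      field_simp
      ring
    rw [hpc, hE2, div_le_iff₀ (by positivity : (0:ℝ) < (2 - γ*L - γ*μ)*(2*(L-μ)))]
    linarith [h9]

section AuxGD2
variable {E : Type*} [NormedAddCommGroup E] [InnerProductSpace ℝ E] [CompleteSpace E]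

lemma one_step (L μ : ℝ) (f : E → ℝ) (hL : 0 < L) (hμ : μ ≤ 0)
    (hdiff : Differentiable ℝ f)
    (hsmooth : ConvexOn ℝ Set.univ (fun z => L / 2 * ‖z‖ ^ 2 - f z))
    (hcurv : ConvexOn ℝ Set.univ (fun z => f z - μ / 2 * ‖z‖ ^ 2))
    (γ : ℝ) (hγ : 0 < γ) (hl2 : γ * L < 2)
    (hsq : (γ*L)^2 - (γ*L)*(γ*μ) + (γ*μ)^2 ≤ (3 - γ*L - γ*μ)^2)
    (x : E) (m : ℝ) (hm0 : 0 ≤ m) (hmX : m ≤ ‖gradient f x‖^2)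
    (hmY : m ≤ ‖gradient f (x - γ • gradient f x)‖^2) :
    f (x - γ • gradient f x) + γ * pcoef (γ*L) (γ*μ) / 2 * m ≤ f x := by
  have hLμ : μ < L := by linarith
  set a := gradient f x with ha
  set y := x - γ • a with hy
  set b := gradient f y with hb
  set X := ‖a‖^2 with hX
  set Y := ‖b‖^2 with hY
  set s := ⟪a, b⟫ with hs'
  have hyx : y - x = -(γ • a) := by rw [hy]; abel
  have hxy : x - y = γ • a := by rw [hy]; abel
  have h1 := interp_ineq L μ f hLμ hdiff hsmooth hcurv x y
  have h2 := interp_ineq L μ f hLμ hdiff hsmooth hcurv y x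
  rw [← ha, ← hb] at h1 h2
  have e11 : ⟪a, y - x⟫ = -(γ * X) := by
    rw [hyx, inner_neg_right, real_inner_smul_right, real_inner_self_eq_norm_sq]
  have e12 : ‖y - x‖^2 = γ^2 * X := by
    rw [hyx, norm_neg, norm_smul, mul_pow, Real.norm_eq_abs, sq_abs]
  have e13 : ‖b - a - μ • (y - x)‖^2 = Y - 2*(1-γ*μ)*s + (1-γ*μ)^2*X := by
    have hveq : b - a - μ • (y - x) = b - (1 - γ*μ) • a := by
      rw [hyx]; module
    rw [hveq, norm_sub_sq_real, real_inner_smul_right, real_inner_comm a b, ← hs',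
      norm_smul, mul_pow, Real.norm_eq_abs, sq_abs]
    ring
  have e21 : ⟪b, x - y⟫ = γ * s := by
    rw [hxy, real_inner_smul_right, real_inner_comm a b, ← hs']
  have e22 : ‖x - y‖^2 = γ^2 * X := by
    rw [hxy, norm_smul, mul_pow, Real.norm_eq_abs, sq_abs]
  have e23 : ‖a - b - μ • (x - y)‖^2 = Y - 2*(1-γ*μ)*s + (1-γ*μ)^2*X := by
    have hveq : a - b - μ • (x - y) = -(b - (1 - γ*μ) • a) := by
      rw [hxy]; module
    rw [hveq, norm_neg, norm_sub_sq_real, real_inner_smul_right, real_inner_comm a b, ← hs',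
      norm_smul, mul_pow, Real.norm_eq_abs, sq_abs]
    ring
  rw [e11, e12, e13] at h1
  rw [e21, e22, e23] at h2
  have hCS : 2*s ≤ X + Y := by
    have h0 : (0:ℝ) ≤ ‖a - b‖^2 := by positivity
    rw [norm_sub_sq_real] at h0
    rw [hs']
    linarith [h0]
  have hkey := scalar_step L μ γ X Y s (f x - f y) m hL hμ hγ hl2 hsq hm0 hmX hmY hCS
    (by linarith [h2]) (by linarith [h1])
  linarith [hkey]

lemma gbar_bounds (L μ κ γ : ℝ) (hL : 0 < L) (hμ : μ ≤ 0) (hκ : κ = μ / L) (hγ : 0 < γ)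
    (hle : γ * L ≤ 3 / (1 + κ + Real.sqrt (1 - κ + κ ^ 2))) :
    γ * L < 2 ∧ (γ*L)^2 - (γ*L)*(γ*μ) + (γ*μ)^2 ≤ (3 - γ*L - γ*μ)^2 := by
  have hμL : μ = κ * L := by rw [hκ]; field_simp
  have hκ0 : κ ≤ 0 := by nlinarith [hμL, hμ, hL]
  set sq := Real.sqrt (1 - κ + κ ^ 2) with hsqdef
  have hsnn : 0 ≤ sq := Real.sqrt_nonneg _
  have hs2 : sq ^ 2 = 1 - κ + κ ^ 2 := Real.sq_sqrt (by nlinarith)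
  have hsgt : -κ < sq := by nlinarith [hs2, hsnn, hκ0]
  have hden : 0 < 1 + κ + sq := by linarith
  have hmul : γ * L * (1 + κ + sq) ≤ 3 := by
    rw [le_div_iff₀ hden] at hle
    exact hle
  have hu : γ * μ = γ * L * κ := by rw [hμL]; ring
  constructor
  · have h2s : 1 - 2*κ < 2*sq := by nlinarith [hs2, hsnn, hκ0]
    nlinarith [hmul, hden, mul_pos hγ hL]
  · have h3 : γ*L*sq ≤ 3 - γ*L - γ*μ := by
      rw [hu]; linarith [hmul]
    have h0 : 0 ≤ γ*L*sq := mul_nonneg (mul_nonneg hγ.le hL.le) hsnn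
    have hls : (γ*L*sq)*(γ*L*sq) = (γ*L)^2 - (γ*L)*(γ*μ) + (γ*μ)^2 := by
      calc (γ*L*sq)*(γ*L*sq) = (γ*L)^2 * sq^2 := by ring
        _ = (γ*L)^2 * (1 - κ + κ^2) := by rw [hs2]
        _ = (γ*L)^2 - (γ*L)*(γ*L*κ) + (γ*L*κ)^2 := by ring
        _ = (γ*L)^2 - (γ*L)*(γ*μ) + (γ*μ)^2 := by rw [← hu]
    nlinarith [mul_self_le_mul_self h0 h3, hls]

lemma pcoef_nonneg (l u : ℝ) (hl0 : 0 < l) (hl2 : l < 2) (hu : u ≤ 0) : 0 ≤ pcoef l u := by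
  have hlu : 0 < l - u := by linarith
  have hprod : 0 ≤ (-u) * (2 - l) := mul_nonneg (by linarith) (by linarith)
  rcases le_total l 1 with h | h
  · rw [pcoef, abs_of_nonneg (by linarith : (0:ℝ) ≤ 1 - l),
      show (1 - u) - (1 - l) = l - u from by ring]
    have hd : -(l*u)/(l-u) ≤ 2 := by
      rw [div_le_iff₀ hlu]
      nlinarith [hprod]
    linarith
  · have he : 0 < 2 - l - u := by linarith
    rw [pcoef, abs_of_nonpos (by linarith : 1 - l ≤ 0),
      show (1 - u) - -(1 - l) = 2 - l - u from by ring]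
    have hd : -(l*u)/(2-l-u) ≤ 2 := by
      rw [div_le_iff₀ he]
      nlinarith [hprod]
    linarith

end AuxGD2

/-- **Rate of gradient descent with variable stepsizes on smooth weakly convex functions
(Theorem 4 / `thm:wc_GM_hypo`).**
Let `L > 0`, `μ ≤ 0`, `κ = μ/L`, `f ∈ F_{μ,L}` bounded below, and run `N ≥ 1` steps with
stepsizes `γ_i` satisfying `0 < γ_i L ≤ γ̄₁ := 3/(1 + κ + √(1 − κ + κ²))`. Then
`(1/(2L))·min_{0≤i≤N} ‖∇f(x_i)‖² ≤ (f(x₀) − f_*)/(1 + Σ_i γ_i L·p(γ_i L, γ_i μ))`. -/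
theorem gd_nonconvex_rate_variable_stepsizes
    {E : Type*} [NormedAddCommGroup E] [InnerProductSpace ℝ E] [CompleteSpace E]
    (L μ : ℝ) (hL : 0 < L) (hμ : μ ≤ 0)
    (κ : ℝ) (hκ : κ = μ / L)
    (f : E → ℝ) (hdiff : Differentiable ℝ f)
    (hsmooth : ConvexOn ℝ Set.univ (fun z => L / 2 * ‖z‖ ^ 2 - f z))
    (hcurv : ConvexOn ℝ Set.univ (fun z => f z - μ / 2 * ‖z‖ ^ 2))
    (hbdd : BddBelow (Set.range f))
    (gbar1 : ℝ) (hgbar1 : gbar1 = 3 / (1 + κ + Real.sqrt (1 - κ + κ ^ 2)))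
    (N : ℕ) (hN : 1 ≤ N)
    (γ : ℕ → ℝ) (hγ : ∀ i < N, 0 < γ i ∧ γ i * L ≤ gbar1)
    (x : ℕ → E) (hx : ∀ i < N, x (i + 1) = x i - γ i • gradient f (x i)) :
    1 / (2 * L) * (⨅ i : Fin (N + 1), ‖gradient f (x i)‖ ^ 2) ≤
      (f (x 0) - ⨅ y, f y) /
        (1 + ∑ i ∈ Finset.range N, γ i * L * pcoef (γ i * L) (γ i * μ)) := by
  
  have hlast : ∀ z : E, (⨅ y, f y) + 1/(2*L) * ‖gradient f z‖^2 ≤ f z := by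
    intro z
    have hub := descent_ub L f hdiff hsmooth z (z - (1/L) • gradient f z)
    have hzz : (z - (1/L) • gradient f z) - z = -((1/L) • gradient f z) := by abel
    have e1 : ⟪gradient f z, (z - (1/L) • gradient f z) - z⟫
        = -(1/L * ‖gradient f z‖^2) := by
      rw [hzz, inner_neg_right, real_inner_smul_right, real_inner_self_eq_norm_sq]
    have e2 : ‖(z - (1/L) • gradient f z) - z‖^2 = (1/L)^2 * ‖gradient f z‖^2 := by
      rw [hzz, norm_neg, norm_smul, mul_pow, Real.norm_eq_abs, sq_abs]
    rw [e1, e2] at hub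
    have hinf : (⨅ y, f y) ≤ f (z - (1/L) • gradient f z) := ciInf_le hbdd _
    have hF2 : (1/L) * ‖gradient f z‖^2 - L/2 * ((1/L)^2 * ‖gradient f z‖^2)
        = 1/(2*L) * ‖gradient f z‖^2 := by
      field_simp
      ring
    linarith [hub, hinf, hF2]
  set m := ⨅ i : Fin (N+1), ‖gradient f (x i)‖^2 with hm
  have hbr : BddBelow (Set.range fun i : Fin (N+1) => ‖gradient f (x i)‖^2) := by
    refine ⟨0, ?_⟩
    rintro _ ⟨i, rfl⟩
    positivity
  have hm0 : 0 ≤ m := le_ciInf fun i => by positivity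
  have hmle : ∀ i : ℕ, i ≤ N → m ≤ ‖gradient f (x i)‖^2 := fun i hi => by
    have h := ciInf_le hbr (⟨i, by omega⟩ : Fin (N+1))
    simpa using h
  have hbounds : ∀ i, i < N → γ i * L < 2 ∧
      (γ i*L)^2 - (γ i*L)*(γ i*μ) + (γ i*μ)^2 ≤ (3 - γ i*L - γ i*μ)^2 := by
    intro i hi
    have h := (hγ i hi).2
    rw [hgbar1] at h
    exact gbar_bounds L μ κ (γ i) hL hμ hκ (hγ i hi).1 h
  have hsum : ∀ n, n ≤ N →
      f (x n) + (∑ i ∈ Finset.range n, γ i * L * pcoef (γ i*L) (γ i*μ)) * (1/(2*L)*m)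
        ≤ f (x 0) := by
    intro n
    induction n with
    | zero => intro _; simp
    | succ k ih =>
      intro hk
      have hkN : k < N := hk
      have ihh := ih (le_of_lt hkN)
      have hx' := hx k hkN
      have hstep := one_step L μ f hL hμ hdiff hsmooth hcurv (γ k) (hγ k hkN).1
        (hbounds k hkN).1 (hbounds k hkN).2 (x k) m hm0 (hmle k (le_of_lt hkN))
        (by rw [← hx']; exact hmle (k+1) hk)
      rw [← hx'] at hstep
      have hco : γ k * pcoef (γ k*L) (γ k*μ) / 2 * m
          = (γ k * L * pcoef (γ k*L) (γ k*μ)) * (1/(2*L)*m) := by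
        field_simp
      rw [Finset.sum_range_succ]
      linarith [hstep, ihh, hco]
  have hterm : ∀ i ∈ Finset.range N, 0 ≤ γ i * L * pcoef (γ i * L) (γ i * μ) := by
    intro i hi
    rw [Finset.mem_range] at hi
    have h1 := (hγ i hi).1
    have hl0 : 0 < γ i * L := mul_pos h1 hL
    have hu : γ i * μ ≤ 0 := by
      have h2 := mul_le_mul_of_nonneg_left hμ h1.le
      simpa using h2
    exact mul_nonneg hl0.le (pcoef_nonneg _ _ hl0 (hbounds i hi).1 hu)
  have hS : 0 ≤ ∑ i ∈ Finset.range N, γ i * L * pcoef (γ i * L) (γ i * μ) :=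
    Finset.sum_nonneg hterm
  have hpos : (0:ℝ) < 1 + ∑ i ∈ Finset.range N, γ i * L * pcoef (γ i * L) (γ i * μ) := by
    linarith
  rw [le_div_iff₀ hpos]
  have hA := hsum N le_rfl
  have hB := hlast (x N)
  have hmn : m ≤ ‖gradient f (x N)‖^2 := hmle N le_rfl
  have hc : (0:ℝ) ≤ 1/(2*L) := by positivity
  have hBB : (⨅ y, f y) + 1/(2*L)*m ≤ f (x N) := by
    nlinarith [hB, mul_le_mul_of_nonneg_left hmn hc]
  nlinarith [hA, hBB]
end

section
/- For every κ ∈ (−∞, 1) and every integer k ≥ 1, the function t ↦ T_k(t, κ) = E_k(1 − κ·t) − E_k(1 − t) is strictly monotonically increasing on the open interval (1, 2/(1 + max{κ, 0})). -/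
/-- `E_k(x) := Σ_{j=1}^{2k} x^{−j}` (so `E_0 = 0`). -/
noncomputable def Efun (k : ℕ) (x : ℝ) : ℝ := ∑ j ∈ Finset.Icc 1 (2 * k), x ^ (-(j : ℤ))

/-- `T_k(t, κ) := E_k(1 − κ·t) − E_k(1 − t)`. -/
noncomputable def Tfun (k : ℕ) (t κ : ℝ) : ℝ := Efun k (1 - κ * t) - Efun k (1 - t)


private lemma sum_pair' (f : ℕ → ℝ) (k : ℕ) :
    ∑ j ∈ Finset.Icc 1 (2 * k), f j
      = ∑ m ∈ Finset.range k, (f (2 * m + 1) + f (2 * m + 2)) := by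
  induction k with
  | zero => simp
  | succ n ih =>
      have h1 : 2 * (n + 1) = (2 * n + 1) + 1 := by ring
      rw [h1, Finset.sum_Icc_succ_top (by omega), Finset.sum_Icc_succ_top (by omega), ih,
        Finset.sum_range_succ]
      ring

private lemma bern2 (m : ℕ) (x : ℝ) (hx : 0 ≤ x) :
    1 + (2*(m:ℝ)+2)*x + ((m:ℝ)+1)*(2*(m:ℝ)+1)*x^2 ≤ (1+x)^(2*m+2) := by
  induction m with
  | zero => norm_num; nlinarith [sq_nonneg x]
  | succ n ih =>
      have h : (1+x)^(2*(n+1)+2) = (1+x)^(2*n+2) * (1+x)^2 := by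
        rw [← pow_add]; ring_nf
      rw [h]
      push_cast
      nlinarith [ih, sq_nonneg x, mul_nonneg (mul_nonneg (Nat.cast_nonneg n : (0:ℝ) ≤ n) hx) hx,
        mul_nonneg hx hx, sq_nonneg (1+x), (Nat.cast_nonneg n : (0:ℝ) ≤ n),
        mul_nonneg (mul_nonneg (mul_nonneg (Nat.cast_nonneg n : (0:ℝ) ≤ n) hx) hx) hx]

private lemma bern (m : ℕ) (x : ℝ) (hx : 0 ≤ x) :
    (4*(m:ℝ)+3)*x ≤ (1+x)^(2*m+2) := by
  have h := bern2 m x hx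
  nlinarith [sq_nonneg (2*((m:ℝ)+1)*x - 1), (Nat.cast_nonneg m : (0:ℝ) ≤ m), sq_nonneg x,
    mul_nonneg (Nat.cast_nonneg m : (0:ℝ) ≤ m) (sq_nonneg x)]

private lemma pair_pos (m : ℕ) (κ u a : ℝ) (hu : 0 < u) (ha0 : a < 0) (ha1 : -1 < a)
    (hcond : κ < 0 → 1 - κ ≤ u) :
    0 < (((2*m+1 : ℕ) : ℝ) * κ * u ^ (-((2*m+1 : ℕ) : ℤ) - 1)
          - ((2*m+1 : ℕ) : ℝ) * a ^ (-((2*m+1 : ℕ) : ℤ) - 1))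
        + (((2*m+2 : ℕ) : ℝ) * κ * u ^ (-((2*m+2 : ℕ) : ℤ) - 1)
          - ((2*m+2 : ℕ) : ℝ) * a ^ (-((2*m+2 : ℕ) : ℤ) - 1)) := by
  have he1 : (-((2*m+1 : ℕ) : ℤ) - 1) = -((2*m+2 : ℕ) : ℤ) := by push_cast; ring
  have he2 : (-((2*m+2 : ℕ) : ℤ) - 1) = -((2*m+3 : ℕ) : ℤ) := by push_cast; ring
  have hz : ∀ (x : ℝ) (n : ℕ), x ^ (-(n : ℤ)) = (x ^ n)⁻¹ := by
    intro x n; rw [zpow_neg, zpow_natCast]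
  rw [he1, he2, hz, hz, hz, hz]
  set s : ℝ := -a with hs
  have hs0 : 0 < s := by simp [hs]; linarith
  have hs1 : s < 1 := by simp [hs]; linarith
  have haS : a = -s := by simp [hs]
  have haeven : a ^ (2*m+2) = s ^ (2*m+2) := by
    rw [haS, Even.neg_pow ⟨m+1, by ring⟩]
  have haodd : a ^ (2*m+3) = -(s ^ (2*m+3)) := by
    rw [haS, Odd.neg_pow ⟨m+1, by ring⟩]
  rw [haeven, haodd, inv_neg]
  -- abbreviations
  have hsp2 : (0:ℝ) < s ^ (2*m+2) := pow_pos hs0 _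
  have hsp3 : (0:ℝ) < s ^ (2*m+3) := pow_pos hs0 _
  have hup2 : (0:ℝ) < u ^ (2*m+2) := pow_pos hu _
  have hup3 : (0:ℝ) < u ^ (2*m+3) := pow_pos hu _
  -- the "a"-part is > 1
  have hA : 1 < -(((2*m+1 : ℕ) : ℝ) * (s ^ (2*m+2))⁻¹) + ((2*m+2 : ℕ) : ℝ) * (s ^ (2*m+3))⁻¹ := by
    have hrw : -(((2*m+1 : ℕ) : ℝ) * (s ^ (2*m+2))⁻¹) + ((2*m+2 : ℕ) : ℝ) * (s ^ (2*m+3))⁻¹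
        = (((2*m+2 : ℕ) : ℝ) - ((2*m+1 : ℕ) : ℝ) * s) / s ^ (2*m+3) := by
      rw [pow_succ]
      field_simp
      ring
    rw [hrw, one_lt_div hsp3]
    have h1 : s ^ (2*m+3) < 1 := pow_lt_one₀ (le_of_lt hs0) hs1 (by omega)
    have h2 : ((2*m+1 : ℕ) : ℝ) * s < ((2*m+1 : ℕ) : ℝ) := by
      have : (0:ℝ) < ((2*m+1 : ℕ) : ℝ) := by positivity
      nlinarith
    push_cast at h2 ⊢
    linarith
  -- the "κ"-part is ≥ -1
  have hK : -1 ≤ ((2*m+1 : ℕ) : ℝ) * κ * (u ^ (2*m+2))⁻¹ + ((2*m+2 : ℕ) : ℝ) * κ * (u ^ (2*m+3))⁻¹ := by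
    rcases le_or_gt 0 κ with hκ | hκ
    · have : (0:ℝ) ≤ ((2*m+1 : ℕ) : ℝ) * κ * (u ^ (2*m+2))⁻¹ + ((2*m+2 : ℕ) : ℝ) * κ * (u ^ (2*m+3))⁻¹ := by
        positivity
      linarith
    · set x : ℝ := -κ with hx
      have hx0 : 0 < x := by simp [hx]; linarith
      have hxu : 1 + x ≤ u := by have := hcond hκ; linarith [this]
      have hu1 : 1 < u := by linarith
      have hκx : κ = -x := by simp [hx]
      rw [hκx]
      -- suffices: (2m+1)x/u^{2m+2} + (2m+2)x/u^{2m+3} ≤ 1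
      rw [neg_le, ← sub_nonneg]
      have hstep : ((2*m+1 : ℕ) : ℝ) * x * (u ^ (2*m+2))⁻¹ + ((2*m+2 : ℕ) : ℝ) * x * (u ^ (2*m+3))⁻¹
          ≤ (4*(m:ℝ)+3) * x * (u ^ (2*m+2))⁻¹ := by
        have hmono : (u ^ (2*m+3))⁻¹ ≤ (u ^ (2*m+2))⁻¹ := by
          apply inv_anti₀ hup2
          calc u ^ (2*m+2) = u ^ (2*m+2) * 1 := by ring
            _ ≤ u ^ (2*m+2) * u := by nlinarith
            _ = u ^ (2*m+3) := by ring
        have h1 : ((2*m+2 : ℕ) : ℝ) * x * (u ^ (2*m+3))⁻¹ ≤ ((2*m+2 : ℕ) : ℝ) * x * (u ^ (2*m+2))⁻¹ := by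
          apply mul_le_mul_of_nonneg_left hmono (by positivity)
        push_cast
        push_cast at h1
        linarith
      have hfin : (4*(m:ℝ)+3) * x * (u ^ (2*m+2))⁻¹ ≤ 1 := by
        rw [← div_eq_mul_inv, div_le_one hup2]
        calc (4*(m:ℝ)+3) * x ≤ (1+x)^(2*m+2) := bern m x (le_of_lt hx0)
          _ ≤ u ^ (2*m+2) := by
              apply pow_le_pow_left₀ (by linarith) hxu
      have heq : ∀ c : ℝ, c * -x * (u ^ (2*m+2))⁻¹ = -(c * x * (u ^ (2*m+2))⁻¹) := by intro c; ring
      nlinarith [hstep, hfin]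
  -- combine
  have goal_eq : (((2*m+1 : ℕ) : ℝ) * κ * (u ^ (2*m+2))⁻¹ - ((2*m+1 : ℕ) : ℝ) * (s ^ (2*m+2))⁻¹)
        + (((2*m+2 : ℕ) : ℝ) * κ * (u ^ (2*m+3))⁻¹ - ((2*m+2 : ℕ) : ℝ) * -(s ^ (2*m+3))⁻¹)
      = (((2*m+1 : ℕ) : ℝ) * κ * (u ^ (2*m+2))⁻¹ + ((2*m+2 : ℕ) : ℝ) * κ * (u ^ (2*m+3))⁻¹)
        + (-(((2*m+1 : ℕ) : ℝ) * (s ^ (2*m+2))⁻¹) + ((2*m+2 : ℕ) : ℝ) * (s ^ (2*m+3))⁻¹) := by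
    ring
  rw [goal_eq]
  linarith

/-- **Strict monotonicity of `T_k` in the stepsize (Proposition 1 /
`prop:monotonicity_Tk`).** For every `κ < 1` and integer `k ≥ 1`, the function
`t ↦ T_k(t,κ)` is strictly increasing on `(1, 2/(1 + [κ]₊))`. -/
theorem Tfun_strictMonoOn (κ : ℝ) (hκ : κ < 1) (k : ℕ) (hk : 1 ≤ k) :
    StrictMonoOn (fun t => Tfun k t κ) (Set.Ioo 1 (2 / (1 + max κ 0))) := by
  -- basic facts about points of the interval
  have hmax : (0:ℝ) ≤ max κ 0 := le_max_right _ _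
  have hfacts : ∀ t ∈ Set.Ioo (1:ℝ) (2 / (1 + max κ 0)),
      0 < 1 - κ * t ∧ 1 - t < 0 ∧ -1 < 1 - t ∧ (κ < 0 → 1 - κ ≤ 1 - κ * t) := by
    intro t ht
    obtain ⟨ht1, ht2⟩ := ht
    have ht2' : t < 2 := by
      have : 2 / (1 + max κ 0) ≤ 2 := by
        apply div_le_self (by norm_num) (by linarith)
      linarith
    refine ⟨?_, by linarith, by linarith, ?_⟩
    · rcases le_or_gt κ 0 with h | h
      · nlinarith
      · have hmx : max κ 0 = κ := max_eq_left h.le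
        rw [hmx] at ht2
        have h1κ : (0:ℝ) < 1 + κ := by linarith
        have := (lt_div_iff₀ h1κ).1 ht2
        nlinarith
    · intro h; nlinarith
  -- the derivative
  set D : ℝ → ℝ := fun t => ∑ j ∈ Finset.Icc 1 (2*k),
      ((j:ℝ) * κ * (1 - κ*t) ^ (-(j:ℤ) - 1) - (j:ℝ) * (1 - t) ^ (-(j:ℤ) - 1)) with hD
  have hDer : ∀ t ∈ Set.Ioo (1:ℝ) (2 / (1 + max κ 0)),
      HasDerivAt (fun t => Tfun k t κ) (D t) t := by
    intro t ht
    obtain ⟨hu, ha0, _, _⟩ := hfacts t ht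
    have hune : (1 - κ * t) ≠ 0 := ne_of_gt hu
    have hane : (1 - t) ≠ 0 := ne_of_lt ha0
    have h1 : HasDerivAt (fun t : ℝ => 1 - κ * t) (-κ) t := by
      simpa using ((hasDerivAt_id t).const_mul κ).const_sub 1
    have h2 : HasDerivAt (fun t : ℝ => 1 - t) (-1) t := by
      simpa using (hasDerivAt_id t).const_sub 1
    have hA : ∀ j ∈ Finset.Icc 1 (2*k),
        HasDerivAt (fun t : ℝ => (1 - κ*t) ^ (-(j:ℤ)))
          ((j:ℝ) * κ * (1 - κ*t) ^ (-(j:ℤ) - 1)) t := by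
      intro j _
      have := (hasDerivAt_zpow (-(j:ℤ)) (1 - κ*t) (Or.inl hune)).comp t h1
      refine this.congr_deriv ?_
      push_cast
      ring
    have hB : ∀ j ∈ Finset.Icc 1 (2*k),
        HasDerivAt (fun t : ℝ => (1 - t) ^ (-(j:ℤ)))
          ((j:ℝ) * (1 - t) ^ (-(j:ℤ) - 1)) t := by
      intro j _
      have := (hasDerivAt_zpow (-(j:ℤ)) (1 - t) (Or.inl hane)).comp t h2
      refine this.congr_deriv ?_
      push_cast
      ring
    have hsum : HasDerivAt (fun t => Tfun k t κ)
        ((∑ j ∈ Finset.Icc 1 (2*k), (j:ℝ) * κ * (1 - κ*t) ^ (-(j:ℤ) - 1))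
          - ∑ j ∈ Finset.Icc 1 (2*k), (j:ℝ) * (1 - t) ^ (-(j:ℤ) - 1)) t := by
      have := (HasDerivAt.fun_sum hA).fun_sub (HasDerivAt.fun_sum hB)
      simpa [Tfun, Efun] using this
    have hDt : D t = (∑ j ∈ Finset.Icc 1 (2*k), (j:ℝ) * κ * (1 - κ*t) ^ (-(j:ℤ) - 1))
          - ∑ j ∈ Finset.Icc 1 (2*k), (j:ℝ) * (1 - t) ^ (-(j:ℤ) - 1) := by
      rw [hD]; exact Finset.sum_sub_distrib _ _
    rw [hDt]
    exact hsum
  have hpos : ∀ t ∈ Set.Ioo (1:ℝ) (2 / (1 + max κ 0)), 0 < D t := by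
    intro t ht
    obtain ⟨hu, ha0, ha1, hcond⟩ := hfacts t ht
    have hDt : D t = ∑ m ∈ Finset.range k,
        (((2*m+1 : ℕ):ℝ) * κ * (1 - κ*t) ^ (-((2*m+1:ℕ):ℤ) - 1) - ((2*m+1:ℕ):ℝ) * (1 - t) ^ (-((2*m+1:ℕ):ℤ) - 1)
          + (((2*m+2 : ℕ):ℝ) * κ * (1 - κ*t) ^ (-((2*m+2:ℕ):ℤ) - 1) - ((2*m+2:ℕ):ℝ) * (1 - t) ^ (-((2*m+2:ℕ):ℤ) - 1))) := by
      rw [hD]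
      exact sum_pair' (fun j => (j:ℝ) * κ * (1 - κ*t) ^ (-(j:ℤ) - 1) - (j:ℝ) * (1 - t) ^ (-(j:ℤ) - 1)) k
    rw [hDt]
    apply Finset.sum_pos
    · intro m _
      exact pair_pos m κ (1 - κ*t) (1 - t) hu ha0 ha1 hcond
    · exact Finset.nonempty_range_iff.mpr (by omega)
  apply strictMonoOn_of_deriv_pos (convex_Ioo _ _)
  · intro t ht
    exact ((hDer t ht).continuousAt).continuousWithinAt
  · rw [interior_Ioo]
    intro t ht
    rw [(hDer t ht).deriv]
    exact hpos t ht
end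

section
/- For every κ ∈ (−∞, 1) and every integer k ≥ 1, there exists a unique t ∈ (1, 2/(1 + max{κ, 0})) such that T_k(t, κ) = E_k(1 − κ·t) − E_k(1 − t) = 0 (this unique root is the stepsize threshold γ̄_k(κ)). -/
lemma sum_pairing (f : ℕ → ℝ) : ∀ k : ℕ,
    ∑ j ∈ Finset.Icc 1 (2*k), f j = ∑ m ∈ Finset.range k, (f (2*m+1) + f (2*m+2))
  | 0 => by simp
  | (k+1) => by
    rw [Finset.sum_range_succ, ← sum_pairing f k]
    have h1 : 2*(k+1) = (2*k+1)+1 := by ring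
    rw [h1, Finset.sum_Icc_succ_top (by omega), Finset.sum_Icc_succ_top (by omega)]
    ring

lemma zpow_neg_nat (x : ℝ) (n : ℕ) : x ^ (-(n:ℤ)) = (x ^ n)⁻¹ := by
  rw [zpow_neg, zpow_natCast]

lemma quad_bound (u : ℝ) (hu : 0 ≤ u) : ∀ n : ℕ,
    1 + ((n:ℝ)+1)*u + (((n:ℝ)+1)*(n:ℝ)/2)*u^2 ≤ (1+u)^(n+1)
  | 0 => by norm_num
  | (n+1) => by
    have ih := quad_bound u hu n
    have h1 : (0:ℝ) < 1 + u := by linarith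
    have hn : (0:ℝ) ≤ (n:ℝ) := Nat.cast_nonneg n
    have step : (1+u) * (1 + ((n:ℝ)+1)*u + (((n:ℝ)+1)*(n:ℝ)/2)*u^2) ≤ (1+u)^(n+1+1) := by
      calc (1+u) * (1 + ((n:ℝ)+1)*u + (((n:ℝ)+1)*(n:ℝ)/2)*u^2)
          ≤ (1+u) * (1+u)^(n+1) := by nlinarith
        _ = (1+u)^(n+1+1) := by ring
    refine le_trans ?_ step
    push_cast
    nlinarith [mul_nonneg (mul_nonneg (mul_nonneg hu hu) hu) hn]

lemma key_bound (j : ℕ) (hj : 1 ≤ j) (u : ℝ) (hu : 0 ≤ u) : 2*(j:ℝ)*u ≤ (1+u)^(j+1) := by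
  obtain ⟨n, rfl⟩ : ∃ n, j = n + 1 := ⟨j - 1, by omega⟩
  have h := quad_bound u hu (n+1)
  have hn : (0:ℝ) ≤ (n:ℝ) := Nat.cast_nonneg n
  push_cast at h ⊢
  nlinarith [sq_nonneg (((n:ℝ)+1)*u - 1), sq_nonneg u, sq_nonneg ((n:ℝ)*u)]

lemma Tfun_eq_sum (k : ℕ) (t κ : ℝ) :
    Tfun k t κ = ∑ j ∈ Finset.Icc 1 (2*k), ((1-κ*t) ^ (-(j:ℤ)) - (1-t) ^ (-(j:ℤ))) := by
  simp [Tfun, Efun, Finset.sum_sub_distrib]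

lemma Tfun_hasDerivAt (k : ℕ) (κ t : ℝ) (hx : 1 - κ*t ≠ 0) (hy : 1 - t ≠ 0) :
    HasDerivAt (fun u => Tfun k u κ)
      (∑ j ∈ Finset.Icc 1 (2*k),
        ((j:ℝ) * κ * ((1-κ*t)^(j+1))⁻¹ - (j:ℝ) * ((1-t)^(j+1))⁻¹)) t := by
  have h : (fun u => Tfun k u κ)
      = fun u => ∑ j ∈ Finset.Icc 1 (2*k), ((1-κ*u) ^ (-(j:ℤ)) - (1-u) ^ (-(j:ℤ))) := by
    funext u; exact Tfun_eq_sum k u κ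
  rw [h]
  apply HasDerivAt.fun_sum
  intro j hj
  have h1 : HasDerivAt (fun u : ℝ => 1 - κ*u) (-κ) t := by
    simpa using ((hasDerivAt_id t).const_mul κ).const_sub 1
  have h2 : HasDerivAt (fun u : ℝ => 1 - u) (-1 : ℝ) t := by
    simpa using (hasDerivAt_id t).const_sub 1
  have hz1 := (hasDerivAt_zpow (-(j:ℤ)) (1-κ*t) (Or.inl hx)).comp t h1
  have hz2 := (hasDerivAt_zpow (-(j:ℤ)) (1-t) (Or.inl hy)).comp t h2
  convert hz1.sub hz2 using 1
  · rfl
  have e1 : (1-κ*t) ^ (-(j:ℤ) - 1) = ((1-κ*t)^(j+1))⁻¹ := by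
    rw [show (-(j:ℤ) - 1) = -(((j+1 : ℕ)):ℤ) by push_cast; ring, zpow_neg_nat]
  have e2 : (1-t) ^ (-(j:ℤ) - 1) = ((1-t)^(j+1))⁻¹ := by
    rw [show (-(j:ℤ) - 1) = -(((j+1 : ℕ)):ℤ) by push_cast; ring, zpow_neg_nat]
  simp only [Function.comp, e1, e2]
  push_cast
  ring

lemma Tfun_continuousOn (k : ℕ) (κ : ℝ) (S : Set ℝ)
    (hx : ∀ t ∈ S, 1 - κ*t ≠ 0) (hy : ∀ t ∈ S, 1 - t ≠ 0) :
    ContinuousOn (fun t => Tfun k t κ) S := by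
  have h : (fun t => Tfun k t κ)
      = fun t => ∑ j ∈ Finset.Icc 1 (2*k), ((1-κ*t) ^ (-(j:ℤ)) - (1-t) ^ (-(j:ℤ))) := by
    funext u; exact Tfun_eq_sum k u κ
  rw [h]
  apply continuousOn_finset_sum
  intro j _
  apply ContinuousOn.sub
  · exact ContinuousOn.zpow₀ (by fun_prop) _ (fun a ha => Or.inl (hx a ha))
  · exact ContinuousOn.zpow₀ (by fun_prop) _ (fun a ha => Or.inl (hy a ha))

lemma deriv_sum_pos (κ : ℝ) (hκ : κ < 1) (k : ℕ) (hk : 1 ≤ k) (t : ℝ)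
    (ht1 : 1 < t) (ht2 : t < 2 / (1 + max κ 0)) :
    0 < ∑ j ∈ Finset.Icc 1 (2*k),
      ((j:ℝ) * κ * ((1-κ*t)^(j+1))⁻¹ - (j:ℝ) * ((1-t)^(j+1))⁻¹) := by
  have hm0 : (0:ℝ) ≤ max κ 0 := le_max_right κ 0
  have hden : (0:ℝ) < 1 + max κ 0 := by linarith
  have ht0 : (0:ℝ) < t := by linarith
  have ht2' : t < 2 := lt_of_lt_of_le ht2 (div_le_self (by norm_num) (by linarith))
  set s : ℝ := t - 1 with hs
  have hs0 : 0 < s := by rw [hs]; linarith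
  have hs1 : s < 1 := by rw [hs]; linarith
  have hx : 0 < 1 - κ * t := by
    rcases le_or_gt κ 0 with h | h
    · nlinarith
    · have hmax : max κ 0 = κ := max_eq_left h.le
      rw [hmax, lt_div_iff₀ (by linarith)] at ht2
      nlinarith
  rw [Finset.sum_sub_distrib]
  have hB : ∑ j ∈ Finset.Icc 1 (2*k), (j:ℝ) * ((1-t)^(j+1))⁻¹ < -(k:ℝ) := by
    rw [sum_pairing (fun j => (j:ℝ) * ((1-t)^(j+1))⁻¹) k]
    have hlt : ∀ m ∈ Finset.range k,
        (fun m => (((2*m+1 : ℕ)):ℝ) * ((1-t)^(2*m+1+1))⁻¹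
          + (((2*m+2 : ℕ)):ℝ) * ((1-t)^(2*m+2+1))⁻¹) m < (fun _ => (-1:ℝ)) m := by
      intro m _
      simp only []
      have hsp : 0 < s ^ (2*m+3) := pow_pos hs0 _
      have he1 : (1-t)^(2*m+1+1) = s^(2*m+2) := by
        rw [show (1:ℝ)-t = -s by rw [hs]; ring, show 2*m+1+1 = 2*m+2 from rfl]
        exact Even.neg_pow ⟨m+1, by ring⟩ s
      have he2 : (1-t)^(2*m+2+1) = -(s^(2*m+3)) := by
        rw [show (1:ℝ)-t = -s by rw [hs]; ring, show 2*m+2+1 = 2*m+3 from rfl]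
        exact Odd.neg_pow ⟨m+1, by ring⟩ s
      rw [he1, he2]
      have hcast1 : ((2*m+1:ℕ):ℝ) = 2*(m:ℝ)+1 := by push_cast; ring
      have hcast2 : ((2*m+2:ℕ):ℝ) = 2*(m:ℝ)+2 := by push_cast; ring
      rw [hcast1, hcast2, inv_neg]
      have key : (2*(m:ℝ)+1) * s - (2*(m:ℝ)+2) < -1 * s^(2*m+3) := by
        have h1 : s^(2*m+3) < 1 := pow_lt_one₀ hs0.le hs1 (by omega)
        have h2 : (2*(m:ℝ)+1) * s < 2*(m:ℝ)+1 := by nlinarith [Nat.cast_nonneg (α := ℝ) m]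
        linarith
      have e : (2*(m:ℝ)+1) * (s^(2*m+2))⁻¹ + (2*(m:ℝ)+2) * -(s^(2*m+3))⁻¹
          = ((2*(m:ℝ)+1) * s - (2*(m:ℝ)+2)) / s^(2*m+3) := by
        have h2 : s ≠ 0 := ne_of_gt hs0
        field_simp
        ring
      rw [e, div_lt_iff₀ hsp]
      linarith
    calc ∑ m ∈ Finset.range k, ((((2*m+1 : ℕ)):ℝ) * ((1-t)^(2*m+1+1))⁻¹
          + (((2*m+2 : ℕ)):ℝ) * ((1-t)^(2*m+2+1))⁻¹)
        < ∑ _m ∈ Finset.range k, (-1:ℝ) :=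
          Finset.sum_lt_sum_of_nonempty (Finset.nonempty_range_iff.mpr (by omega)) hlt
      _ = -(k:ℝ) := by simp
  have hA : -((k:ℝ)/t) ≤ ∑ j ∈ Finset.Icc 1 (2*k), (j:ℝ) * κ * ((1-κ*t)^(j+1))⁻¹ := by
    rcases le_or_gt 0 κ with h | h
    · have h1 : (0:ℝ) ≤ ∑ j ∈ Finset.Icc 1 (2*k), (j:ℝ) * κ * ((1-κ*t)^(j+1))⁻¹ :=
        Finset.sum_nonneg fun j _ => by positivity
      have h2 : 0 ≤ (k:ℝ)/t := by positivity
      linarith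
    · have hterm : ∀ j ∈ Finset.Icc 1 (2*k),
          -(1/(2*t)) ≤ (j:ℝ) * κ * ((1-κ*t)^(j+1))⁻¹ := by
        intro j hj
        have hj1 : 1 ≤ j := (Finset.mem_Icc.mp hj).1
        have ha0 : 0 < -κ := by linarith
        have hu : 0 < (-κ) * t := mul_pos ha0 ht0
        have hxe : 1 - κ*t = 1 + (-κ)*t := by ring
        have hkb := key_bound j hj1 ((-κ)*t) hu.le
        have hpp : 0 < (1+(-κ)*t)^(j+1) := by positivity
        have hjr : (0:ℝ) < (j:ℝ) := by exact_mod_cast Nat.pos_of_ne_zero (by omega)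
        have h2ju : 0 < 2*(j:ℝ)*((-κ)*t) := by positivity
        have hinv : ((1+(-κ)*t)^(j+1))⁻¹ ≤ (2*(j:ℝ)*((-κ)*t))⁻¹ :=
          inv_anti₀ h2ju hkb
        have h1 : (j:ℝ) * (-κ) * ((1+(-κ)*t)^(j+1))⁻¹ ≤ (j:ℝ) * (-κ) * (2*(j:ℝ)*((-κ)*t))⁻¹ :=
          mul_le_mul_of_nonneg_left hinv (by positivity)
        have h2 : (j:ℝ) * (-κ) * (2*(j:ℝ)*((-κ)*t))⁻¹ = 1/(2*t) := by
          have hj0 : (j:ℝ) ≠ 0 := ne_of_gt hjr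
          have hk0 : κ ≠ 0 := ne_of_lt h
          have ht0' : t ≠ 0 := ne_of_gt ht0
          rw [eq_div_iff (by positivity)]
          field_simp
        rw [hxe]
        nlinarith [h1, h2]
      calc -((k:ℝ)/t) = ∑ _j ∈ Finset.Icc 1 (2*k), (-(1/(2*t))) := by
            rw [Finset.sum_const, Nat.card_Icc]
            have : (2*k+1-1) = 2*k := by omega
            rw [this, nsmul_eq_mul]
            push_cast
            field_simp
        _ ≤ _ := Finset.sum_le_sum hterm
  have hksmall : (k:ℝ)/t < (k:ℝ) :=
    div_lt_self (by exact_mod_cast Nat.pos_of_ne_zero (by omega)) ht1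
  linarith

lemma Tfun_pos_at_hi (κ : ℝ) (hκ : κ < 1) (k : ℕ) (hk : 1 ≤ k) :
    0 < Tfun k (2 / (1 + max κ 0)) κ := by
  rcases le_or_gt κ 0 with h | h
  · have hmax : max κ 0 = 0 := max_eq_right h
    rw [hmax]
    norm_num
    have h2 : Tfun k 2 κ = Efun k (1 - κ*2) - Efun k (-1) := by
      rw [Tfun]; norm_num
    have hE1 : Efun k (-1 : ℝ) = 0 := by
      rw [Efun, sum_pairing (fun j => (-1:ℝ) ^ (-(j:ℤ))) k]
      apply Finset.sum_eq_zero
      intro m _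
      rw [zpow_neg_nat, zpow_neg_nat, Odd.neg_one_pow ⟨m, by ring⟩,
        Even.neg_one_pow ⟨m+1, by ring⟩]
      norm_num
    have hE2 : 0 < Efun k (1 - κ*2) := by
      rw [Efun]
      apply Finset.sum_pos
      · intro j _
        exact zpow_pos (by linarith) _
      · exact Finset.nonempty_Icc.mpr (by omega)
    rw [h2, hE1]
    linarith
  · have hmax : max κ 0 = κ := max_eq_left h.le
    rw [hmax]
    set c : ℝ := (1-κ)/(1+κ) with hc
    have hκ1 : (0:ℝ) < 1 + κ := by linarith
    have hc0 : 0 < c := div_pos (by linarith) hκ1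
    have he1 : 1 - κ * (2 / (1+κ)) = c := by rw [hc]; field_simp; ring
    have he2 : 1 - (2 / (1+κ)) = -c := by rw [hc]; field_simp; ring
    rw [Tfun, he1, he2, Efun, Efun, ← Finset.sum_sub_distrib,
      sum_pairing (fun j => c ^ (-(j:ℤ)) - (-c) ^ (-(j:ℤ))) k]
    apply Finset.sum_pos
    · intro m _
      rw [zpow_neg_nat, zpow_neg_nat, zpow_neg_nat, zpow_neg_nat,
        Odd.neg_pow ⟨m, by ring⟩, Even.neg_pow ⟨m+1, by ring⟩, inv_neg]
      have : 0 < (c ^ (2*m+1))⁻¹ := by positivity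
      linarith
    · exact Finset.nonempty_range_iff.mpr (by omega)

lemma Efun_lower (k : ℕ) (hk : 1 ≤ k) (s : ℝ) (hs0 : 0 < s) (hs1 : s < 1) :
    (1-s)/s^2 ≤ Efun k (-s) := by
  rw [Efun, sum_pairing (fun j => (-s : ℝ) ^ (-(j:ℤ))) k]
  have hpair : ∀ m : ℕ, ((-s:ℝ) ^ (-((2*m+1:ℕ):ℤ)) + (-s:ℝ) ^ (-((2*m+2:ℕ):ℤ)))
      = (1-s)/s^(2*m+2) := by
    intro m
    rw [zpow_neg_nat, zpow_neg_nat, Odd.neg_pow ⟨m, by ring⟩, Even.neg_pow ⟨m+1, by ring⟩,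
      inv_neg]
    have hs : s ≠ 0 := ne_of_gt hs0
    field_simp
    ring
  have h0 : (1-s)/s^2 = ((-s:ℝ) ^ (-((2*0+1:ℕ):ℤ)) + (-s:ℝ) ^ (-((2*0+2:ℕ):ℤ))) := by
    rw [hpair 0]
  rw [h0]
  apply Finset.single_le_sum (f := fun m => ((-s:ℝ) ^ (-((2*m+1:ℕ):ℤ)) + (-s:ℝ) ^ (-((2*m+2:ℕ):ℤ))))
  · intro m _
    rw [hpair m]
    exact div_nonneg (by linarith) (pow_pos hs0 _).le
  · exact Finset.mem_range.mpr (by omega)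

lemma Efun_upper (κ : ℝ) (hκ : κ < 1) (k : ℕ) (t : ℝ) (ht1 : 1 ≤ t)
    (hthi : t ≤ 2 / (1 + max κ 0)) :
    Efun k (1 - κ*t) ≤ 2*(k:ℝ) * ((min ((1-κ)/(1 + max κ 0)) 1)^(2*k))⁻¹ := by
  have hm0 : (0:ℝ) ≤ max κ 0 := le_max_right κ 0
  have hden : (0:ℝ) < 1 + max κ 0 := by linarith
  set d : ℝ := min ((1-κ)/(1 + max κ 0)) 1 with hd
  have hd0 : 0 < d := lt_min (div_pos (by linarith) hden) one_pos
  have hd1 : d ≤ 1 := min_le_right _ _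
  have hxd : d ≤ 1 - κ*t := by
    refine le_trans (min_le_left _ _) ?_
    rcases le_or_gt κ 0 with h | h
    · have hmax : max κ 0 = 0 := max_eq_right h
      rw [hmax]
      have : κ * t ≤ κ := by nlinarith
      rw [add_zero, div_one]
      linarith
    · have hmax : max κ 0 = κ := max_eq_left h.le
      rw [hmax] at hthi ⊢
      rw [le_div_iff₀ (by linarith)] at hthi
      rw [div_le_iff₀ (by linarith)]
      nlinarith
  have hx0 : 0 < 1 - κ*t := lt_of_lt_of_le hd0 hxd
  rw [Efun]
  have hterm : ∀ j ∈ Finset.Icc 1 (2*k), (1-κ*t) ^ (-(j:ℤ)) ≤ (d^(2*k))⁻¹ := by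
    intro j hj
    have hj2 : j ≤ 2*k := (Finset.mem_Icc.mp hj).2
    rw [zpow_neg_nat]
    have h1 : d^(2*k) ≤ d^j := pow_le_pow_of_le_one hd0.le hd1 hj2
    have h2 : d^j ≤ (1-κ*t)^j := pow_le_pow_left₀ hd0.le hxd j
    exact inv_anti₀ (pow_pos hd0 _) (le_trans h1 h2)
  calc ∑ j ∈ Finset.Icc 1 (2*k), (1-κ*t) ^ (-(j:ℤ))
      ≤ ∑ _j ∈ Finset.Icc 1 (2*k), (d^(2*k))⁻¹ := Finset.sum_le_sum hterm
    _ = 2*(k:ℝ) * (d^(2*k))⁻¹ := by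
        rw [Finset.sum_const, Nat.card_Icc]
        have : (2*k+1-1) = 2*k := by omega
        rw [this, nsmul_eq_mul]
        push_cast
        ring

/-- **Existence and uniqueness of the stepsize thresholds `γ̄_k`
(Definition 4 / `def:stepsize_thresholds`).** For every `κ < 1` and integer `k ≥ 1`,
`T_k(·, κ)` has a unique root in the open interval `(1, 2/(1 + [κ]₊))`. -/
theorem stepsize_threshold_exists_unique (κ : ℝ) (hκ : κ < 1) (k : ℕ) (hk : 1 ≤ k) :
    ∃! t : ℝ, t ∈ Set.Ioo 1 (2 / (1 + max κ 0)) ∧ Tfun k t κ = 0 := by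
  have hm0 : (0:ℝ) ≤ max κ 0 := le_max_right κ 0
  have hm1 : max κ 0 < 1 := max_lt hκ one_pos
  have hden : (0:ℝ) < 1 + max κ 0 := by linarith
  set hi : ℝ := 2 / (1 + max κ 0) with hhi
  have h1hi : 1 < hi := by rw [hhi, lt_div_iff₀ hden]; linarith
  have hxpos : ∀ t : ℝ, 0 < t → t ≤ hi → 0 < 1 - κ * t := by
    intro t ht0 hthi
    rcases le_or_gt κ 0 with h | h
    · nlinarith
    · have hmax : max κ 0 = κ := max_eq_left h.le
      rw [hhi, hmax, le_div_iff₀ (by linarith)] at hthi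
      nlinarith
  have hmono : StrictMonoOn (fun t => Tfun k t κ) (Set.Ioo 1 hi) := by
    apply strictMonoOn_of_deriv_pos (convex_Ioo 1 hi)
    · apply Tfun_continuousOn
      · intro t ht
        exact ne_of_gt (hxpos t (by linarith [ht.1]) ht.2.le)
      · intro t ht
        have : (1:ℝ) - t < 0 := by linarith [ht.1]
        exact ne_of_lt this
    · intro x hx
      rw [interior_Ioo] at hx
      have hne1 : 1 - κ*x ≠ 0 := ne_of_gt (hxpos x (by linarith [hx.1]) hx.2.le)
      have hne2 : (1:ℝ) - x ≠ 0 := by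
        have : (1:ℝ) - x < 0 := by linarith [hx.1]
        exact ne_of_lt this
      rw [(Tfun_hasDerivAt k κ x hne1 hne2).deriv]
      exact deriv_sum_pos κ hκ k hk x hx.1 hx.2
  have hTpos : 0 < Tfun k hi κ := Tfun_pos_at_hi κ hκ k hk
  -- choose a point with negative value
  have hk0 : (0:ℝ) < (k:ℝ) := by exact_mod_cast Nat.pos_of_ne_zero (by omega)
  set d : ℝ := min ((1-κ)/(1 + max κ 0)) 1 with hd
  have hd0 : 0 < d := lt_min (div_pos (by linarith) hden) one_pos
  set M : ℝ := 2*(k:ℝ) * ((d^(2*k))⁻¹) with hM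
  have hM0 : 0 < M := by
    rw [hM]; positivity
  set s0 : ℝ := min (1/(2*M+2)) ((hi-1)/2) with hs0d
  have hs0pos : 0 < s0 := lt_min (by positivity) (by linarith)
  have hs0le : s0 ≤ 1/(2*M+2) := min_le_left _ _
  have hs0half : s0 ≤ 1/2 := by
    refine le_trans hs0le ?_
    rw [div_le_div_iff₀ (by linarith) (by norm_num)]
    linarith
  have hs0hi : 1 + s0 < hi := by
    have := min_le_right (1/(2*M+2)) ((hi-1)/2)
    have h2 : s0 ≤ (hi-1)/2 := this
    linarith
  set t0 : ℝ := 1 + s0 with ht0d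
  have ht01 : 1 < t0 := by rw [ht0d]; linarith
  have hTneg : Tfun k t0 κ < 0 := by
    have hub : Efun k (1 - κ*t0) ≤ M := by
      rw [hM, hd]
      exact Efun_upper κ hκ k t0 (by linarith) (by rw [← hhi]; linarith)
    have hlb : (1-s0)/s0^2 ≤ Efun k (1-t0) := by
      have he : (1:ℝ) - t0 = -s0 := by rw [ht0d]; ring
      rw [he]
      exact Efun_lower k hk s0 hs0pos (by linarith)
    have hfact : s0*(2*M+2) ≤ 1 := by
      rw [← le_div_iff₀ (by positivity)]
      exact hs0le
    have hkey : M < (1-s0)/s0^2 := by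
      rw [lt_div_iff₀ (by positivity)]
      nlinarith [mul_le_mul_of_nonneg_left hfact hs0pos.le, sq_nonneg s0]
    rw [Tfun]
    linarith
  have hcont : ContinuousOn (fun t => Tfun k t κ) (Set.Icc t0 hi) := by
    apply Tfun_continuousOn
    · intro t ht
      exact ne_of_gt (hxpos t (by linarith [ht.1]) ht.2)
    · intro t ht
      have : (1:ℝ) - t < 0 := by linarith [ht.1]
      exact ne_of_lt this
  obtain ⟨t₁, ht₁mem, ht₁val⟩ :=
    intermediate_value_Ioo (le_of_lt hs0hi) hcont (Set.mem_Ioo.mpr ⟨hTneg, hTpos⟩)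
  have ht₁Ioo : t₁ ∈ Set.Ioo 1 hi := ⟨by linarith [ht₁mem.1], ht₁mem.2⟩
  refine ⟨t₁, ⟨ht₁Ioo, ht₁val⟩, ?_⟩
  rintro y ⟨hyIoo, hyval⟩
  exact hmono.injOn hyIoo ht₁Ioo (hyval.trans ht₁val.symm)
end

section
/- Let κ < 0. Then the cubic equation −κ(1+κ)t³ + (3κ + (1+κ)²)t² − 4(1+κ)t + 4 = 0 has a unique solution t* in the interval [1, 2). Moreover, t* is the unique maximizer over (0, 2) of the function t ↦ t · p(t, κt), where p(l,u) := 2 − (−l·u)/((1−u) − |1−l|). -/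
/-- Value of `s * pcoef s (κ s)` on `(0,1]`. -/
lemma pcoef_lo (κ s : ℝ) (hκ : κ < 0) (h0 : 0 < s) (h1 : s ≤ 1) :
    s * pcoef s (κ * s) = (2 * s * (1 - κ) + κ * s ^ 2) / (1 - κ) := by
  have habs : |1 - s| = 1 - s := abs_of_nonneg (by linarith)
  have hk0 : (0:ℝ) < 1 - κ := by linarith
  have hd : s * (1 - κ) ≠ 0 := ne_of_gt (mul_pos h0 hk0)
  have hk : (1 : ℝ) - κ ≠ 0 := by linarith
  unfold pcoef
  rw [habs]
  have : (1 - κ * s) - (1 - s) = s * (1 - κ) := by ring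
  rw [this]
  field_simp
  ring

/-- Value of `s * pcoef s (κ s)` on `[1,2)`. -/
lemma pcoef_hi (κ s : ℝ) (hκ : κ < 0) (h1 : 1 ≤ s) (h2 : s < 2) :
    s * pcoef s (κ * s) =
      (4 * s - 2 * (1 + κ) * s ^ 2 + κ * s ^ 3) / (2 - (1 + κ) * s) := by
  have habs : |1 - s| = s - 1 := by
    rw [abs_of_nonpos (by linarith)]; ring
  have hD : (0 : ℝ) < 2 - (1 + κ) * s := by nlinarith
  have hD' : (2 : ℝ) - (1 + κ) * s ≠ 0 := hD.ne'
  unfold pcoef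
  rw [habs]
  have : (1 - κ * s) - (s - 1) = 2 - (1 + κ) * s := by ring
  rw [this]
  rw [eq_div_iff hD']
  have key : -(s * (κ * s)) / (2 - (1 + κ) * s) * (2 - (1 + κ) * s) = -(s * (κ * s)) :=
    div_mul_cancel₀ _ hD'
  linear_combination (-s) * key

/-- Key lemma: any root `t ∈ (1,2)` of the cubic is a strict maximizer over `(0,2)`. -/
lemma key_max (κ t : ℝ) (hκ : κ < 0) (ht1 : 1 < t) (ht2 : t < 2)
    (hC : -κ * (1 + κ) * t ^ 3 + (3 * κ + (1 + κ) ^ 2) * t ^ 2 - 4 * (1 + κ) * t + 4 = 0)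
    (s : ℝ) (hs0 : 0 < s) (hs2 : s < 2) (hst : s ≠ t) :
    s * pcoef s (κ * s) < t * pcoef t (κ * t) := by
  have hDt : (0 : ℝ) < 2 - (1 + κ) * t := by nlinarith
  have hNt : (0 : ℝ) < 4 * t - 2 * (1 + κ) * t ^ 2 + κ * t ^ 3 := by
    have : 4 * t - 2 * (1 + κ) * t ^ 2 + κ * t ^ 3 = t * (2 - t) * (2 - κ * t) := by ring
    rw [this]
    have : (0:ℝ) < 2 - κ * t := by nlinarith
    have h2t : (0:ℝ) < 2 - t := by linarith
    positivity
  rw [pcoef_hi κ t hκ (le_of_lt ht1) ht2]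
  rcases le_or_gt 1 s with hs1 | hs1
  · -- s ∈ [1,2)
    rw [pcoef_hi κ s hκ hs1 hs2]
    have hDs : (0 : ℝ) < 2 - (1 + κ) * s := by nlinarith
    rw [div_lt_div_iff₀ hDs hDt]
    -- key identity times t^2
    have hsq : (0:ℝ) < (s - t) ^ 2 := by
      have := sub_ne_zero.mpr hst
      positivity
    have hlin : (0:ℝ) < -κ * t ^ 2 * (2 - (1 + κ) * t) * s
        + 2 * (4 * t - 2 * (1 + κ) * t ^ 2 + κ * t ^ 3) := by
      have h1 : (0:ℝ) < -κ * t ^ 2 * (2 - (1 + κ) * t) * s := by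
        have hmk : (0:ℝ) < -κ := by linarith
        positivity
      linarith
    have key : t ^ 2 * ((4 * t - 2 * (1 + κ) * t ^ 2 + κ * t ^ 3) * (2 - (1 + κ) * s)
        - (4 * s - 2 * (1 + κ) * s ^ 2 + κ * s ^ 3) * (2 - (1 + κ) * t))
        = (s - t) ^ 2 * (-κ * t ^ 2 * (2 - (1 + κ) * t) * s
          + 2 * (4 * t - 2 * (1 + κ) * t ^ 2 + κ * t ^ 3)) := by
      linear_combination (2 * t ^ 2 * s - 2 * t * s ^ 2) * hC
    nlinarith [mul_pos hsq hlin, sq_nonneg t]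
  · -- s ∈ (0,1)
    rw [pcoef_lo κ s hκ hs0 (le_of_lt hs1)]
    have hk : (0:ℝ) < 1 - κ := by linarith
    rw [div_lt_div_iff₀ hk hDt]
    have hsq : (0:ℝ) < (1 - t) ^ 2 := by
      have : t - 1 ≠ 0 := by intro h; nlinarith
      nlinarith [sq_nonneg (1 - t)]
    have hlin : (0:ℝ) < -κ * t ^ 2 * (2 - (1 + κ) * t)
        + 2 * (4 * t - 2 * (1 + κ) * t ^ 2 + κ * t ^ 3) := by
      have h1 : (0:ℝ) < -κ * t ^ 2 * (2 - (1 + κ) * t) := by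
        have hmk : (0:ℝ) < -κ := by linarith
        positivity
      linarith
    have hmid : (0:ℝ) ≤ t ^ 2 * ((1 - s) * (2 - κ * (1 - s))) * (2 - (1 + κ) * t) := by
      have h1s : (0:ℝ) ≤ 1 - s := by linarith
      have h2 : (0:ℝ) ≤ 2 - κ * (1 - s) := by nlinarith
      positivity
    have key : t ^ 2 * ((4 * t - 2 * (1 + κ) * t ^ 2 + κ * t ^ 3) * (1 - κ)
        - (2 * s * (1 - κ) + κ * s ^ 2) * (2 - (1 + κ) * t))
        = (1 - t) ^ 2 * (-κ * t ^ 2 * (2 - (1 + κ) * t)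
            + 2 * (4 * t - 2 * (1 + κ) * t ^ 2 + κ * t ^ 3))
          + t ^ 2 * ((1 - s) * (2 - κ * (1 - s))) * (2 - (1 + κ) * t) := by
      linear_combination (2 * t ^ 2 - 2 * t) * hC
    nlinarith [mul_pos hsq hlin, sq_nonneg t]

/-- **Optimal constant stepsize for nonconvex functions (Proposition 4 /
`prop:gamma_star`).** For `κ < 0` the cubic
`−κ(1+κ)t³ + (3κ+(1+κ)²)t² − 4(1+κ)t + 4 = 0` has a unique solution `t*` in `[1,2)`,
and `t*` is the unique maximizer of `t ↦ t·p(t, κt)` over `(0,2)`. -/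
theorem optimal_nonconvex_stepsize (κ : ℝ) (hκ : κ < 0) :
    (∃! t : ℝ, t ∈ Set.Ico (1 : ℝ) 2 ∧
      -κ * (1 + κ) * t ^ 3 + (3 * κ + (1 + κ) ^ 2) * t ^ 2 - 4 * (1 + κ) * t + 4 = 0) ∧
    (∀ t : ℝ, t ∈ Set.Ico (1 : ℝ) 2 →
      -κ * (1 + κ) * t ^ 3 + (3 * κ + (1 + κ) ^ 2) * t ^ 2 - 4 * (1 + κ) * t + 4 = 0 →
      ∀ s ∈ Set.Ioo (0 : ℝ) 2, s ≠ t → s * pcoef s (κ * s) < t * pcoef t (κ * t)) := by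
  set C : ℝ → ℝ := fun t =>
    -κ * (1 + κ) * t ^ 3 + (3 * κ + (1 + κ) ^ 2) * t ^ 2 - 4 * (1 + κ) * t + 4 with hCdef
  have hroot_gt : ∀ t : ℝ, t ∈ Set.Ico (1 : ℝ) 2 → C t = 0 → 1 < t := by
    intro t ht h0
    rcases lt_or_eq_of_le ht.1 with h | h
    · exact h
    · exfalso
      rw [← h] at h0
      simp only [hCdef] at h0
      nlinarith
  -- existence of a root in (1,2)
  have hcont : ContinuousOn C (Set.Icc (1:ℝ) 2) := by fun_prop
  have hC1 : C 1 = 1 := by simp only [hCdef]; ring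
  have hC2 : C 2 = 4 * κ - 4 * κ ^ 2 := by simp only [hCdef]; ring
  have hmem : (0:ℝ) ∈ Set.Ioo (C 2) (C 1) := by
    constructor
    · rw [hC2]; nlinarith
    · rw [hC1]; norm_num
  obtain ⟨t₀, ht₀mem, ht₀⟩ := intermediate_value_Ioo' (by norm_num : (1:ℝ) ≤ 2) hcont hmem
  have ht₀1 : 1 < t₀ := ht₀mem.1
  have ht₀2 : t₀ < 2 := ht₀mem.2
  constructor
  · refine ⟨t₀, ⟨⟨le_of_lt ht₀1, ht₀2⟩, ht₀⟩, ?_⟩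
    rintro s ⟨hsmem, hs0⟩
    by_contra hne
    have hs1 : 1 < s := hroot_gt s hsmem hs0
    have h1 := key_max κ t₀ hκ ht₀1 ht₀2 ht₀ s (by linarith) hsmem.2 hne
    have h2 := key_max κ s hκ hs1 hsmem.2 hs0 t₀ (by linarith) ht₀2
      (fun h => hne h.symm)
    linarith
  · intro t ht h0 s hs hst
    have ht1 : 1 < t := hroot_gt t ht h0
    exact key_max κ t hκ ht1 ht.2 h0 s hs.1 hs.2 hst
end

section
/- Let L > 0 and let f : E → ℝ be a differentiable function on a real inner product space E with f convex and x ↦ (L/2)‖x‖² − f(x) convex (f ∈ F_{0,L}), and assume f_* := inf_x f(x) > −∞. Define s_{−1} := 0 and s_i := (3 − 2 s_{i−1} + √(9 − 4 s_{i−1})) / (2(2 − s_{i−1})) for i ≥ 0. Fix an integer N ≥ 1 and run gradient descent x_{i+1} = x_i − (s_i/L)·∇f(x_i) for i = 0,…,N−1. Then (1/(2L))·‖∇f(x_N)‖² ≤ (f(x_0) − f_*) / ( 1 + s_{N−1}/(2 − s_{N−1}) ). -/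
open RealInnerProductSpace

section Aux

variable {E : Type*} [NormedAddCommGroup E] [InnerProductSpace ℝ E] [CompleteSpace E]

/-- Gradient inequality for a differentiable convex function, via `fderiv`. -/
lemma aux_convex_fderiv_ineq (φ : E → ℝ) (hd : Differentiable ℝ φ)
    (hc : ConvexOn ℝ Set.univ φ) (u v : E) :
    φ u + fderiv ℝ φ u (v - u) ≤ φ v := by
  have hline : HasDerivAt (fun t : ℝ => t • (v - u) + u) (v - u) 0 := by
    simpa using ((hasDerivAt_id (0 : ℝ)).smul_const (v - u)).add_const u
  have hcomp : HasDerivAt (fun t : ℝ => φ (t • (v - u) + u)) (fderiv ℝ φ u (v - u)) 0 := by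
    have h1 := (hd ((0 : ℝ) • (v - u) + u)).hasFDerivAt.comp_hasDerivAt 0 hline
    simp only [zero_smul, zero_add] at h1
    exact h1
  have hg : ConvexOn ℝ Set.univ fun t : ℝ => φ (t • (v - u) + u) := by
    have h2 := hc.comp_affineMap (AffineMap.lineMap u v)
    simp only [Set.preimage_univ] at h2
    have hfun : (fun t : ℝ => φ (t • (v - u) + u)) = φ ∘ AffineMap.lineMap u v := by
      funext t
      rw [Function.comp_apply, AffineMap.lineMap_apply, vsub_eq_sub, vadd_eq_add]
    rw [hfun]
    exact h2
  have hslope := hg.le_slope_of_hasDerivAt (Set.mem_univ (0 : ℝ)) (Set.mem_univ (1 : ℝ))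
    one_pos hcomp
  rw [slope_def_field] at hslope
  simp at hslope
  rw [map_sub]
  linarith

lemma aux_fderiv_eq_inner (f : E → ℝ) (hdiff : Differentiable ℝ f) (u w : E) :
    fderiv ℝ f u w = ⟪gradient f u, w⟫ := by
  have h2 := hasGradientAt_iff_hasFDerivAt.mp (hdiff u).hasGradientAt
  rw [h2.fderiv]
  exact InnerProductSpace.toDual_apply_apply

/-- Cleared-denominator descent lemma (smoothness upper bound). -/
lemma aux_descent (L : ℝ) (hL : 0 < L) (f : E → ℝ) (hdiff : Differentiable ℝ f)
    (hsmooth : ConvexOn ℝ Set.univ (fun z => L / 2 * ‖z‖ ^ 2 - f z)) (u v : E) :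
    2 * L * f v ≤ 2 * L * f u + 2 * L * ⟪gradient f u, v - u⟫
      + L ^ 2 * ‖v - u‖ ^ 2 := by
  have hnsq : ∀ w : E, HasFDerivAt (fun z : E => L / 2 * ‖z‖ ^ 2)
      ((L / 2) • (2 • (innerSL ℝ w))) w := fun w =>
    (hasStrictFDerivAt_norm_sq w).hasFDerivAt.const_mul (L / 2)
  have hh : Differentiable ℝ (fun z : E => L / 2 * ‖z‖ ^ 2 - f z) := fun w =>
    ((hnsq w).sub (hdiff w).hasFDerivAt).differentiableAt
  have key := aux_convex_fderiv_ineq _ hh hsmooth u v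
  have hfd : fderiv ℝ (fun z : E => L / 2 * ‖z‖ ^ 2 - f z) u
      = ((L / 2) • (2 • (innerSL ℝ u)) - fderiv ℝ f u) :=
    ((hnsq u).sub (hdiff u).hasFDerivAt).fderiv
  rw [hfd] at key
  rw [ContinuousLinearMap.sub_apply, ContinuousLinearMap.smul_apply,
    ContinuousLinearMap.smul_apply, innerSL_apply_apply, aux_fderiv_eq_inner f hdiff,
    inner_sub_right, real_inner_self_eq_norm_sq, smul_eq_mul, nsmul_eq_mul] at key
  rw [norm_sub_sq_real]
  have hc : ⟪v, u⟫ = ⟪u, v⟫ := real_inner_comm _ _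
  rw [hc]
  push_cast at key
  nlinarith [mul_le_mul_of_nonneg_left key (by linarith : (0:ℝ) ≤ 2 * L)]

/-- Cleared-denominator cocoercivity inequality for `f ∈ F_{0,L}`. -/
lemma aux_coco (L : ℝ) (hL : 0 < L) (f : E → ℝ) (hdiff : Differentiable ℝ f)
    (hcvx : ConvexOn ℝ Set.univ f)
    (hsmooth : ConvexOn ℝ Set.univ (fun z => L / 2 * ‖z‖ ^ 2 - f z)) (u v : E) :
    2 * L * f v + 2 * L * ⟪gradient f v, u - v⟫
      + ‖gradient f u - gradient f v‖ ^ 2 ≤ 2 * L * f u := by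
  set d := gradient f u - gradient f v with hd
  set w := u - (1 / L) • d with hw
  have hwu : w - u = -((1 / L) • d) := by rw [hw]; abel
  have h1 := aux_descent L hL f hdiff hsmooth u w
  rw [hwu] at h1
  rw [inner_neg_right, real_inner_smul_right, norm_neg, norm_smul] at h1
  have h2 := aux_convex_fderiv_ineq f hdiff hcvx v w
  rw [aux_fderiv_eq_inner f hdiff] at h2
  have hwv : w - v = (u - v) - (1 / L) • d := by rw [hw]; abel
  rw [hwv, inner_sub_right, real_inner_smul_right] at h2
  have hdd : ⟪gradient f u, d⟫ - ⟪gradient f v, d⟫ = ‖d‖ ^ 2 := by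
    rw [← inner_sub_left, ← hd, real_inner_self_eq_norm_sq]
  have hnorm : (‖(1 / L : ℝ)‖ * ‖d‖) ^ 2 = (1 / L) ^ 2 * ‖d‖ ^ 2 := by
    rw [mul_pow, Real.norm_eq_abs, sq_abs]
  rw [hnorm] at h1
  have e1 : 2 * L * ((1 / L) * ⟪gradient f u, d⟫) = 2 * ⟪gradient f u, d⟫ := by
    field_simp
  have e2 : L ^ 2 * ((1 / L) ^ 2 * ‖d‖ ^ 2) = ‖d‖ ^ 2 := by
    field_simp
  have h2L := mul_le_mul_of_nonneg_left h2 (by linarith : (0:ℝ) ≤ 2 * L)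
  have e3 : 2 * L * ((1 / L) * ⟪gradient f v, d⟫) = 2 * ⟪gradient f v, d⟫ := by
    field_simp
  linarith [h1, h2L, hdd, e1, e2, e3]

end Aux

/-- **Rate of gradient descent with the dynamic stepsize schedule on smooth convex
functions (Corollary 2 / `corollary:convergence_rates_convex_variable_stepsizes`).**
Let `f ∈ F_{0,L}` be bounded below, define (with shifted index, `s 0 = s_{-1} = 0`)
`s_{i} = (3 − 2s_{i−1} + √(9 − 4s_{i−1}))/(2(2 − s_{i−1}))`, and run `N ≥ 1` steps of
gradient descent with stepsizes `γ_i = s_i/L`. Then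
`(1/(2L))‖∇f(x_N)‖² ≤ (f(x₀) − f_*)/(1 + s_{N−1}/(2 − s_{N−1}))`. -/
theorem gd_dynamic_stepsizes_convex_rate
    {E : Type*} [NormedAddCommGroup E] [InnerProductSpace ℝ E] [CompleteSpace E]
    (L : ℝ) (hL : 0 < L) (f : E → ℝ) (hdiff : Differentiable ℝ f)
    (hcvx : ConvexOn ℝ Set.univ f)
    (hsmooth : ConvexOn ℝ Set.univ (fun z => L / 2 * ‖z‖ ^ 2 - f z))
    (hbdd : BddBelow (Set.range f))
    (s : ℕ → ℝ) (hs0 : s 0 = 0)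
    (hrec : ∀ i : ℕ,
      s (i + 1) = (3 - 2 * s i + Real.sqrt (9 - 4 * s i)) / (2 * (2 - s i)))
    (N : ℕ) (hN : 1 ≤ N)
    (x : ℕ → E) (hx : ∀ i < N, x (i + 1) = x i - (s (i + 1) / L) • gradient f (x i)) :
    1 / (2 * L) * ‖gradient f (x N)‖ ^ 2 ≤
      (f (x 0) - ⨅ y, f y) / (1 + s N / (2 - s N)) := by
  -- bounds on the stepsize sequence
  have hsbound : ∀ i, 0 ≤ s i ∧ s i < 2 := by
    intro i
    induction i with
    | zero => rw [hs0]; norm_num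
    | succ n ih =>
      obtain ⟨h0, h2⟩ := ih
      have h9 : (1 : ℝ) ≤ 9 - 4 * s n := by linarith
      have hRsq : (Real.sqrt (9 - 4 * s n)) ^ 2 = 9 - 4 * s n :=
        Real.sq_sqrt (by linarith)
      have hR0 : 0 ≤ Real.sqrt (9 - 4 * s n) := Real.sqrt_nonneg _
      have hR1 : 1 ≤ Real.sqrt (9 - 4 * s n) := by
        nlinarith [hRsq, hR0]
      have hden : (0 : ℝ) < 2 * (2 - s n) := by linarith
      rw [hrec n]
      constructor
      · exact div_nonneg (by linarith) hden.le
      · rw [div_lt_iff₀ hden]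
        nlinarith [hRsq, hR0, sq_nonneg (s n - 2)]
  have hs1 : ∀ n : ℕ, 1 ≤ s (n + 1) := by
    intro n
    obtain ⟨h0, h2⟩ := hsbound n
    have hRsq : (Real.sqrt (9 - 4 * s n)) ^ 2 = 9 - 4 * s n :=
      Real.sq_sqrt (by linarith)
    have hR0 : 0 ≤ Real.sqrt (9 - 4 * s n) := Real.sqrt_nonneg _
    have hR1 : 1 ≤ Real.sqrt (9 - 4 * s n) := by nlinarith [hRsq, hR0]
    have hden : (0 : ℝ) < 2 * (2 - s n) := by linarith
    rw [hrec n, le_div_iff₀ hden]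
    linarith
  -- the key algebraic identity linking consecutive stepsizes
  have hid : ∀ n : ℕ, (2 - s n) * (s (n + 1) * (2 * s (n + 1) - 3))
      = s n * (2 - s (n + 1)) := by
    intro n
    obtain ⟨h0, h2⟩ := hsbound n
    have hRsq : (Real.sqrt (9 - 4 * s n)) ^ 2 = 9 - 4 * s n :=
      Real.sq_sqrt (by linarith)
    have hden : (2 : ℝ) - s n ≠ 0 := by linarith
    have hP : 2 * (2 - s n) * s (n + 1) = 3 - 2 * s n + Real.sqrt (9 - 4 * s n) := by
      rw [hrec n]; field_simp
    have key : (2 - s n) * ((2 - s n) * (s (n + 1) * (2 * s (n + 1) - 3))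
        - s n * (2 - s (n + 1))) = 0 := by
      have hP2 : (2 * (2 - s n) * s (n + 1) - (3 - 2 * s n)) ^ 2 = 9 - 4 * s n := by
        rw [hP]; linear_combination hRsq
      linear_combination (1 / 2) * hP2
    rcases mul_eq_zero.mp key with h | h
    · exact absurd h hden
    · linarith
  -- main invariant
  have inv : ∀ i, i ≤ N →
      s i * ‖gradient f (x i)‖ ^ 2
        ≤ (2 - s i) * ((2 * L) * (f (x 0) - f (x i))) := by
    intro i
    induction i with
    | zero => intro _; rw [hs0]; simp
    | succ n ih =>
      intro hn
      have hnN : n < N := hn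
      have IH := ih (le_of_lt hnN)
      have hxs := hx n hnN
      obtain ⟨hσ0, hσ2⟩ := hsbound n
      obtain ⟨_, hs'2⟩ := hsbound (n + 1)
      have hs'1 := hs1 n
      set σ := s n with hσ
      set s' := s (n + 1) with hs'
      set g := gradient f (x n) with hg
      set g' := gradient f (x (n + 1)) with hg'
      have hdlt : x n - x (n + 1) = (s' / L) • g := by rw [hxs]; abel
      have hdlt' : x (n + 1) - x n = -((s' / L) • g) := by rw [hxs]; abel
      -- cocoercivity in both directions
      have hA := aux_coco L hL f hdiff hcvx hsmooth (x n) (x (n + 1))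
      rw [hdlt, real_inner_smul_right, norm_sub_sq_real] at hA
      have hcomm : ⟪g', g⟫ = ⟪g, g'⟫ := real_inner_comm _ _
      rw [hcomm] at hA
      have hB := aux_coco L hL f hdiff hcvx hsmooth (x (n + 1)) (x n)
      rw [hdlt', inner_neg_right, real_inner_smul_right,
        real_inner_self_eq_norm_sq, norm_sub_sq_real] at hB
      have hcomm2 : ⟪g', g⟫ = ⟪g, g'⟫ := real_inner_comm _ _
      rw [hcomm2] at hB
      set a2 := ‖g‖ ^ 2 with ha2
      set b2 := ‖g'‖ ^ 2 with hb2
      set t := ⟪g, g'⟫ with ht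
      -- clear the 1/L factors
      have e1 : 2 * L * (s' / L * t) = 2 * (s' * t) := by field_simp
      have e2 : 2 * L * (s' / L * a2) = 2 * (s' * a2) := by field_simp
      -- pre-multiplied hypotheses
      have hA' : 2 * L * f (x (n + 1)) + 2 * (s' * t)
          + (b2 - 2 * t + a2) ≤ 2 * L * f (x n) := by linarith [hA, e1]
      have hB' : 2 * L * f (x n) - 2 * (s' * a2)
          + (a2 - 2 * t + b2) ≤ 2 * L * f (x (n + 1)) := by linarith [hB, e2]
      have H1 := mul_le_mul_of_nonneg_left hA' (by linarith : (0:ℝ) ≤ 2 - σ)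
      have H2 := mul_le_mul_of_nonneg_left hB'
        (mul_nonneg (by linarith : (0:ℝ) ≤ 2 - σ) (by linarith : (0:ℝ) ≤ s' - 1))
      have H3 := mul_le_mul_of_nonneg_left IH (by linarith : (0:ℝ) ≤ 2 - s')
      have H4 : a2 * ((2 - σ) * (s' * (2 * s' - 3))) = a2 * (σ * (2 - s')) := by
        rw [hid n]
      have goal' : (2 - σ) * (s' * b2)
          ≤ (2 - σ) * ((2 - s') * ((2 * L) * (f (x 0) - f (x (n + 1))))) := by
        linarith [H1, H2, H3, H4]
      exact le_of_mul_le_mul_left goal' (by linarith : (0:ℝ) < 2 - σ)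
  -- the final lower bound at x N using boundedness below
  obtain ⟨hsN0, hsN2⟩ := hsbound N
  have invN := inv N le_rfl
  set gN := gradient f (x N) with hgN
  set b2 := ‖gN‖ ^ 2 with hb2
  set m := (⨅ y, f y : ℝ) with hm
  -- f_* ≤ f(x N) - ‖gN‖²/(2L)
  have hfs : 2 * L * m + b2 ≤ 2 * L * f (x N) := by
    set w := x N - (1 / L) • gN with hw
    have hwu : w - x N = -((1 / L) • gN) := by rw [hw]; abel
    have h1 := aux_descent L hL f hdiff hsmooth (x N) w
    rw [← hgN] at h1

    rw [hwu, inner_neg_right, real_inner_smul_right, real_inner_self_eq_norm_sq,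
      ← hb2] at h1
    rw [norm_neg, norm_smul] at h1
    have hnorm : (‖(1 / L : ℝ)‖ * ‖gN‖) ^ 2 = (1 / L) ^ 2 * b2 := by
      rw [mul_pow, Real.norm_eq_abs, sq_abs, hb2]
    rw [hnorm] at h1
    have e3 : 2 * L * ((1 / L) * b2) = 2 * b2 := by
      field_simp; try ring
    have e4 : L ^ 2 * ((1 / L) ^ 2 * b2) = b2 := by
      field_simp; try ring
    have hmw : m ≤ f w := ciInf_le hbdd w
    have hmw2 := mul_le_mul_of_nonneg_left hmw (by linarith : (0:ℝ) ≤ 2 * L)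
    linarith [h1, e3, e4, hmw2]
  have h5 : b2 * 2 ≤ (2 - s N) * ((2 * L) * (f (x 0) - m)) := by
    have H := mul_le_mul_of_nonneg_left hfs (by linarith : (0:ℝ) ≤ 2 - s N)
    linarith [invN, H]
  have hDv : 1 + s N / (2 - s N) = 2 / (2 - s N) := by
    have hne : (2 : ℝ) - s N ≠ 0 := by linarith
    field_simp
    ring
  rw [hDv, div_div_eq_mul_div]
  have hlhs : 1 / (2 * L) * b2 = b2 / (2 * L) := by ring
  rw [hlhs, div_le_div_iff₀ (by linarith : (0:ℝ) < 2 * L) (by norm_num : (0:ℝ) < 2)]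
  nlinarith [h5, hsN2, hL]
end

section
/- Let L > 0 and μ < L, and let f : E → ℝ be a differentiable function on a real inner product space E with f ∈ F_{μ,L}. Then for all x, y ∈ E: ⟨∇f(x) − ∇f(y) − L(x − y), ∇f(x) − ∇f(y) − μ(x − y)⟩ ≤ 0. -/
open Set

/-- Gradient of `c/2 * ‖·‖²` is `c • z`. -/
lemma hasGradientAt_const_mul_norm_sq
    {E : Type*} [NormedAddCommGroup E] [InnerProductSpace ℝ E] [CompleteSpace E]
    (c : ℝ) (z : E) :
    HasGradientAt (fun w : E => c / 2 * ‖w‖ ^ 2) (c • z) z := by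
  rw [hasGradientAt_iff_hasFDerivAt]
  have h1 : HasFDerivAt (fun w : E => (inner ℝ w w : ℝ))
      ((fderivInnerCLM ℝ (z, z)).comp ((ContinuousLinearMap.id ℝ E).prod
        (ContinuousLinearMap.id ℝ E))) z :=
    (hasFDerivAt_id z).inner ℝ (hasFDerivAt_id z)
  have h2 := h1.const_mul (c / 2)
  have heq : (fun w : E => c / 2 * (inner ℝ w w : ℝ)) = fun w : E => c / 2 * ‖w‖ ^ 2 := by
    funext w; rw [real_inner_self_eq_norm_sq]
  rw [heq] at h2
  refine h2.congr_fderiv ?_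
  ext v
  simp [InnerProductSpace.toDual_apply_apply, real_inner_smul_left, real_inner_comm z v]
  ring

lemma HasGradientAt.sub'
    {E : Type*} [NormedAddCommGroup E] [InnerProductSpace ℝ E] [CompleteSpace E]
    {f g : E → ℝ} {F G : E → E} {x : E}
    (hf : HasGradientAt f (F x) x) (hg : HasGradientAt g (G x) x) :
    HasGradientAt (fun z => f z - g z) (F x - G x) x := by
  rw [hasGradientAt_iff_hasFDerivAt] at hf hg ⊢
  rw [map_sub]
  exact hf.sub hg

/-- Gradient inequality for a convex differentiable function. -/
lemma grad_ineq
    {E : Type*} [NormedAddCommGroup E] [InnerProductSpace ℝ E] [CompleteSpace E]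
    {g : E → ℝ} {G : E → E} (hg : ∀ z, HasGradientAt g (G z) z)
    (hc : ConvexOn ℝ Set.univ g) (x y : E) :
    (inner ℝ (G x) (y - x) : ℝ) ≤ g y - g x := by
  set φ : ℝ → ℝ := fun t => g (x + t • (y - x)) with hφ
  have hconv : ConvexOn ℝ Set.univ φ := by
    have h := hc.comp_affineMap (AffineMap.lineMap x y : ℝ →ᵃ[ℝ] E)
    have : ((AffineMap.lineMap x y : ℝ →ᵃ[ℝ] E) ⁻¹' Set.univ) = Set.univ := by simp
    rw [this] at h
    refine (show φ = g ∘ (AffineMap.lineMap x y : ℝ →ᵃ[ℝ] E) from ?_) ▸ h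
    funext t
    simp [hφ, AffineMap.lineMap_apply, add_comm]
  have hline : HasDerivAt (fun s : ℝ => x + s • (y - x)) (y - x) 0 := by
    have : HasDerivAt (fun s : ℝ => s • (y - x)) ((1 : ℝ) • (y - x)) 0 :=
      (hasDerivAt_id (0:ℝ)).smul_const (y - x)
    simpa using this.const_add x
  have hd : HasDerivAt φ (inner ℝ (G x) (y - x)) 0 := by
    have h1 := (hg (x + (0:ℝ) • (y - x))).hasFDerivAt.comp_hasDerivAt 0 hline
    simp only [zero_smul, add_zero] at h1
    have h1' : HasDerivAt (g ∘ fun s : ℝ => x + s • (y - x)) (inner ℝ (G x) (y - x)) 0 := by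
      simpa [InnerProductSpace.toDual_apply_apply] using h1
    exact h1'
  have h := hconv.le_slope_of_hasDerivAt (Set.mem_univ 0) (Set.mem_univ 1) zero_lt_one hd
  have hφ0 : φ 0 = g x := by simp [hφ]
  have hφ1 : φ 1 = g y := by simp [hφ]
  rw [slope_def_field] at h
  simp [hφ0, hφ1] at h
  linarith [h]

/-- Cocoercivity for a convex `S`-smooth function. -/
lemma cocoercivity
    {E : Type*} [NormedAddCommGroup E] [InnerProductSpace ℝ E] [CompleteSpace E]
    (S : ℝ) (hS : 0 < S)
    {g : E → ℝ} {G : E → E} (hg : ∀ z, HasGradientAt g (G z) z)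
    (hc : ConvexOn ℝ Set.univ g)
    (hsm : ∀ a b : E, g b ≤ g a + inner ℝ (G a) (b - a) + S / 2 * ‖b - a‖ ^ 2)
    (x y : E) :
    ‖G x - G y‖ ^ 2 ≤ S * inner ℝ (G x - G y) (x - y) := by
  -- key one-sided estimate
  have key : ∀ a b : E,
      g a + (inner ℝ (G a) (b - a) : ℝ) + 1 / (2 * S) * ‖G b - G a‖ ^ 2 ≤ g b := by
    intro a b
    set z : E := b - (1 / S) • (G b - G a) with hz
    have h1 : g a + (inner ℝ (G a) (z - a) : ℝ) ≤ g z := by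
      have := grad_ineq hg hc a z
      linarith
    have h2 : g z ≤ g b + (inner ℝ (G b) (z - b) : ℝ) + S / 2 * ‖z - b‖ ^ 2 := hsm b z
    have hzb : z - b = -((1 / S) • (G b - G a)) := by rw [hz]; abel
    have h3 : (inner ℝ (G b) (z - b) : ℝ) = -(1 / S) * inner ℝ (G b) (G b - G a) := by
      rw [hzb, inner_neg_right, real_inner_smul_right]; ring
    have h4 : ‖z - b‖ ^ 2 = (1 / S) ^ 2 * ‖G b - G a‖ ^ 2 := by
      rw [hzb, norm_neg, norm_smul, Real.norm_eq_abs,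
        abs_of_pos (by positivity : (0:ℝ) < 1 / S), mul_pow]
    have h5 : (inner ℝ (G a) (z - a) : ℝ)
        = inner ℝ (G a) (b - a) - (1 / S) * inner ℝ (G a) (G b - G a) := by
      have : z - a = (b - a) - (1 / S) • (G b - G a) := by rw [hz]; abel
      rw [this, inner_sub_right, real_inner_smul_right]
    have h6 : (inner ℝ (G b) (G b - G a) : ℝ) - (inner ℝ (G a) (G b - G a) : ℝ)
        = ‖G b - G a‖ ^ 2 := by
      rw [← inner_sub_left, real_inner_self_eq_norm_sq]
    have hS' : (0:ℝ) < 1 / S := by positivity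
    have hexp : -(1 / S) * (inner ℝ (G b) (G b - G a) : ℝ)
        + (1 / S) * (inner ℝ (G a) (G b - G a) : ℝ) + S / 2 * ((1 / S) ^ 2 * ‖G b - G a‖ ^ 2)
        = -(1 / (2 * S)) * ‖G b - G a‖ ^ 2 := by
      have hB : (inner ℝ (G b) (G b - G a) : ℝ)
          = inner ℝ (G a) (G b - G a) + ‖G b - G a‖ ^ 2 := by linarith [h6]
      rw [hB]; field_simp; ring
    nlinarith [h1, h2, h3, h4, h5]
  have k1 := key x y
  have k2 := key y x
  have hnorm : ‖G x - G y‖ = ‖G y - G x‖ := by rw [norm_sub_rev]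
  have hin : (inner ℝ (G x) (y - x) : ℝ) + (inner ℝ (G y) (x - y) : ℝ)
      = -(inner ℝ (G x - G y) (x - y) : ℝ) := by
    rw [inner_sub_left]
    have : (inner ℝ (G x) (y - x) : ℝ) = -(inner ℝ (G x) (x - y) : ℝ) := by
      rw [← inner_neg_right]; congr 1; abel
    rw [this]; ring
  have hS2 : (0:ℝ) < 2 * S := by linarith
  have hadd : 1 / (2 * S) * ‖G x - G y‖ ^ 2 + 1 / (2 * S) * ‖G y - G x‖ ^ 2
      ≤ (inner ℝ (G x - G y) (x - y) : ℝ) := by nlinarith [k1, k2, hin]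
  rw [← hnorm] at hadd
  have : 1 / S * ‖G x - G y‖ ^ 2 ≤ (inner ℝ (G x - G y) (x - y) : ℝ) := by
    have : 1 / (2 * S) * ‖G x - G y‖ ^ 2 + 1 / (2 * S) * ‖G x - G y‖ ^ 2
        = 1 / S * ‖G x - G y‖ ^ 2 := by field_simp; ring
    linarith [hadd, this]
  calc ‖G x - G y‖ ^ 2 = S * (1 / S * ‖G x - G y‖ ^ 2) := by field_simp
    _ ≤ S * inner ℝ (G x - G y) (x - y) := by
        exact mul_le_mul_of_nonneg_left this (le_of_lt hS)

/-- **Extended cocoercivity (Corollary 3 / `corr:direct_sum_interp_cond`).**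
For `f ∈ F_{μ,L}` with `μ < L`, `L > 0`, and all `x, y`:
`⟨∇f(x) − ∇f(y) − L(x−y), ∇f(x) − ∇f(y) − μ(x−y)⟩ ≤ 0`. -/
theorem extended_cocoercivity
    {E : Type*} [NormedAddCommGroup E] [InnerProductSpace ℝ E] [CompleteSpace E]
    (L μ : ℝ) (hL : 0 < L) (hμL : μ < L)
    (f : E → ℝ) (hdiff : Differentiable ℝ f)
    (hsmooth : ConvexOn ℝ Set.univ (fun z => L / 2 * ‖z‖ ^ 2 - f z))
    (hcurv : ConvexOn ℝ Set.univ (fun z => f z - μ / 2 * ‖z‖ ^ 2))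
    (x y : E) :
    (inner ℝ (gradient f x - gradient f y - L • (x - y))
           (gradient f x - gradient f y - μ • (x - y)) : ℝ) ≤ 0 := by
  set S := L - μ with hSdef
  have hS : 0 < S := by simp [hSdef]; linarith
  set g : E → ℝ := fun z => f z - μ / 2 * ‖z‖ ^ 2 with hgdef
  set G : E → E := fun z => gradient f z - μ • z with hGdef
  have hgrad : ∀ z, HasGradientAt g (G z) z := fun z =>
    HasGradientAt.sub' (F := gradient f) (G := fun w => μ • w)
      ((hdiff z).hasGradientAt) (hasGradientAt_const_mul_norm_sq μ z)
  -- smoothness upper bound for g from convexity of L/2‖·‖² − f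
  have hsm : ∀ a b : E, g b ≤ g a + inner ℝ (G a) (b - a) + S / 2 * ‖b - a‖ ^ 2 := by
    intro a b
    have hh : ∀ z, HasGradientAt (fun w => L / 2 * ‖w‖ ^ 2 - f w)
        (L • z - gradient f z) z := fun z =>
      HasGradientAt.sub' (F := fun w => L • w) (G := gradient f)
        (hasGradientAt_const_mul_norm_sq L z) ((hdiff z).hasGradientAt)
    have h := grad_ineq hh hsmooth a b
    -- h : ⟪L•a − ∇f a, b − a⟫ ≤ (L/2‖b‖²−f b) − (L/2‖a‖²−f a)
    have hinG : (inner ℝ (G a) (b - a) : ℝ)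
        = inner ℝ (gradient f a) (b - a) - μ * inner ℝ a (b - a) := by
      simp [hGdef, inner_sub_left, real_inner_smul_left]
    have hinL : (inner ℝ (L • a - gradient f a) (b - a) : ℝ)
        = L * inner ℝ a (b - a) - inner ℝ (gradient f a) (b - a) := by
      simp [inner_sub_left, real_inner_smul_left]
    have hexpand : ‖b - a‖ ^ 2 = ‖b‖ ^ 2 - 2 * inner ℝ a (b - a) - ‖a‖ ^ 2 := by
      have := norm_sub_sq_real b a
      have h2 : (inner ℝ a (b - a) : ℝ) = inner ℝ a b - ‖a‖ ^ 2 := by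
        rw [inner_sub_right, real_inner_self_eq_norm_sq]
      rw [h2, this, real_inner_comm b a]; ring
    simp only [hgdef]
    rw [hinL] at h
    rw [hinG]
    nlinarith [h, hexpand]
  have hco := cocoercivity S hS hgrad hcurv hsm x y
  -- now express target
  set w : E := gradient f x - gradient f y with hw
  set d : E := x - y with hd
  have hGxy : G x - G y = w - μ • d := by
    simp [hGdef, hw, hd, smul_sub]; abel
  rw [hGxy] at hco
  have h1 : gradient f x - gradient f y - L • (x - y) = (w - μ • d) - S • d := by
    simp [hw, hd, hSdef, sub_smul]
  have h2 : gradient f x - gradient f y - μ • (x - y) = w - μ • d := by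
    simp [hw, hd]
  rw [h1, h2, inner_sub_left, real_inner_smul_left, real_inner_self_eq_norm_sq]
  have : (inner ℝ (w - μ • d) d : ℝ) = inner ℝ (w - μ • d) (x - y) := by rw [hd]
  nlinarith [hco, real_inner_comm (w - μ • d) d]
end

section
/- Let L > 0 and let f : E → ℝ be a differentiable function on a real inner product space E with f convex and x ↦ (L/2)‖x‖² − f(x) convex (f ∈ F_{0,L}). Let γ > 0 and let x' = x − γ∇f(x) be one gradient-descent step from a point x ∈ E. Then ‖∇f(x)‖² − ‖∇f(x')‖² ≥ ((2 − γL)/(γL)) · ‖∇f(x) − ∇f(x')‖². -/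
open scoped RealInnerProductSpace

/-- Tangent line lies below a convex differentiable function. -/
lemma convex_tangent_le {E : Type*} [NormedAddCommGroup E] [InnerProductSpace ℝ E]
    [CompleteSpace E]
    {g : E → ℝ} (hc : ConvexOn ℝ Set.univ g) {x y G : E}
    (hG : HasGradientAt g G x) : g x + ⟪G, y - x⟫ ≤ g y := by
  have hcurve : ∀ t : ℝ, HasDerivAt (fun t : ℝ => x + t • (y - x)) (y - x) t := fun t => by
    simpa using ((hasDerivAt_id t).smul_const (y - x)).const_add x
  have hφ' : HasDerivAt (fun t : ℝ => g (x + t • (y - x))) ⟪G, y - x⟫ 0 := by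
    have h1 : HasFDerivAt g (InnerProductSpace.toDual ℝ E G) (x + (0:ℝ) • (y - x)) := by
      simpa using hG.hasFDerivAt
    exact (h1.comp_hasDerivAt 0 (hcurve 0)).congr_deriv (by simp)
  have hφc : ConvexOn ℝ Set.univ (fun t : ℝ => g (x + t • (y - x))) := by
    have h2 := hc.comp_affineMap (AffineMap.lineMap x y : ℝ →ᵃ[ℝ] E)
    have heq : (fun t : ℝ => g (x + t • (y - x))) = g ∘ (AffineMap.lineMap x y : ℝ →ᵃ[ℝ] E) := by
      funext t
      simp only [Function.comp_apply, AffineMap.lineMap_apply_module]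
      congr 1
      module
    rw [heq]
    simpa using h2
  have hs := hφc.le_slope_of_hasDerivAt (Set.mem_univ (0:ℝ)) (Set.mem_univ 1) one_pos hφ'
  have e0 : x + (0:ℝ) • (y - x) = x := by module
  have e1 : x + (1:ℝ) • (y - x) = y := by module
  rw [slope_def_field] at hs
  simp only [e0, e1] at hs
  norm_num at hs
  linarith

/-- **Monotonicity of the gradient norm along gradient descent for convex functions
(Lemma 2 / `lemma:monotonicity_gradient_cvx_case`).**
For `f ∈ F_{0,L}`, `γ > 0` and one step `x' = x − γ∇f(x)`:
`‖∇f(x)‖² − ‖∇f(x')‖² ≥ ((2 − γL)/(γL))·‖∇f(x) − ∇f(x')‖²`. -/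
theorem gradient_norm_decrease_convex
    {E : Type*} [NormedAddCommGroup E] [InnerProductSpace ℝ E] [CompleteSpace E]
    (L : ℝ) (hL : 0 < L) (f : E → ℝ) (hdiff : Differentiable ℝ f)
    (hcvx : ConvexOn ℝ Set.univ f)
    (hsmooth : ConvexOn ℝ Set.univ (fun z => L / 2 * ‖z‖ ^ 2 - f z))
    (γ : ℝ) (hγ : 0 < γ)
    (x x' : E) (hx' : x' = x - γ • gradient f x) :
    ‖gradient f x‖ ^ 2 - ‖gradient f x'‖ ^ 2 ≥
      (2 - γ * L) / (γ * L) * ‖gradient f x - gradient f x'‖ ^ 2 := by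
  have hgrad : ∀ u : E, HasGradientAt f (gradient f u) u := fun u =>
    (hdiff u).hasGradientAt
  -- lower bound from convexity
  have lower : ∀ u w : E, f u + ⟪gradient f u, w - u⟫ ≤ f w := fun u w =>
    convex_tangent_le hcvx (hgrad u)
  -- gradient of the smooth part
  have hgradh : ∀ u : E, HasGradientAt (fun z => L / 2 * ‖z‖ ^ 2 - f z)
      (L • u - gradient f u) u := by
    intro u
    rw [hasGradientAt_iff_hasFDerivAt, map_sub]
    have hsq : HasFDerivAt (fun z : E => L / 2 * ‖z‖ ^ 2)
        (InnerProductSpace.toDual ℝ E (L • u)) u := by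
      have h0 := ((hasFDerivAt_id u).inner ℝ (hasFDerivAt_id u)).const_mul (L / 2)
      refine HasFDerivAt.congr_fderiv (h0.congr_of_eventuallyEq ?_) ?_
      · refine Filter.Eventually.of_forall fun z => ?_
        simp only [id]
        rw [real_inner_self_eq_norm_sq]
      · ext w
        simp [real_inner_smul_left, real_inner_comm u w]
        ring
    exact hsq.sub (hgrad u).hasFDerivAt
  -- upper quadratic bound
  have upper : ∀ u w : E, f w ≤ f u + ⟪gradient f u, w - u⟫ + L / 2 * ‖w - u‖ ^ 2 := by
    intro u w
    have h := convex_tangent_le hsmooth (hgradh u) (y := w)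
    have hexp : ‖w - u‖ ^ 2 = ‖w‖ ^ 2 - ‖u‖ ^ 2 - 2 * ⟪u, w - u⟫ := by
      rw [← real_inner_self_eq_norm_sq, ← real_inner_self_eq_norm_sq,
        ← real_inner_self_eq_norm_sq]
      simp only [inner_sub_left, inner_sub_right, real_inner_comm u w]
      ring
    rw [inner_sub_left, real_inner_smul_left] at h
    nlinarith [h]
  -- cocoercivity
  have coco : ∀ u w : E, L⁻¹ * ‖gradient f u - gradient f w‖ ^ 2
      ≤ ⟪gradient f u - gradient f w, u - w⟫ := by
    have key : ∀ u w : E, f u + ⟪gradient f u, w - u⟫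
        + 1 / (2 * L) * ‖gradient f w - gradient f u‖ ^ 2 ≤ f w := by
      intro u w
      set gu := gradient f u
      set gw := gradient f w
      set z := w - L⁻¹ • (gw - gu) with hz
      have h1 := lower u z
      have h2 := upper w z
      have e1 : ⟪gu, z - u⟫ = ⟪gu, w - u⟫ - L⁻¹ * ⟪gu, gw - gu⟫ := by
        rw [hz]
        rw [show w - L⁻¹ • (gw - gu) - u = (w - u) - L⁻¹ • (gw - gu) by abel]
        rw [inner_sub_right, real_inner_smul_right]
      have e2 : ⟪gw, z - w⟫ = - (L⁻¹ * ⟪gw, gw - gu⟫) := by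
        rw [hz, show w - L⁻¹ • (gw - gu) - w = -(L⁻¹ • (gw - gu)) by abel]
        rw [inner_neg_right, real_inner_smul_right]
      have e3 : ‖z - w‖ ^ 2 = L⁻¹ ^ 2 * ‖gw - gu‖ ^ 2 := by
        rw [hz, show w - L⁻¹ • (gw - gu) - w = -(L⁻¹ • (gw - gu)) by abel]
        rw [norm_neg, norm_smul]
        rw [Real.norm_eq_abs, abs_inv, abs_of_pos hL]
        ring
      rw [e1] at h1
      rw [e2, e3] at h2
      have e4 : ⟪gw, gw - gu⟫ - ⟪gu, gw - gu⟫ = ‖gw - gu‖ ^ 2 := by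
        rw [← inner_sub_left, real_inner_self_eq_norm_sq]
      have e4' : L⁻¹ * ⟪gw, gw - gu⟫ - L⁻¹ * ⟪gu, gw - gu⟫ = L⁻¹ * ‖gw - gu‖ ^ 2 := by
        rw [← mul_sub, e4]
      have h6 : L / 2 * (L⁻¹ ^ 2 * ‖gw - gu‖ ^ 2) = 1 / (2 * L) * ‖gw - gu‖ ^ 2 := by
        field_simp
      have h8 : L⁻¹ * ‖gw - gu‖ ^ 2 = 2 * (1 / (2 * L) * ‖gw - gu‖ ^ 2) := by
        field_simp
      linarith [h1, h2]
    intro u w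
    have k1 := key u w
    have k2 := key w u
    have e5 : ⟪gradient f u, w - u⟫ + ⟪gradient f w, u - w⟫
        = - ⟪gradient f u - gradient f w, u - w⟫ := by
      rw [inner_sub_left]
      rw [show w - u = -(u - w) by abel, inner_neg_right]
      ring
    have e6 : ‖gradient f w - gradient f u‖ = ‖gradient f u - gradient f w‖ := by
      rw [← norm_neg]; congr 1; abel
    rw [e6] at k1
    have hL2 : (0:ℝ) < 2 * L := by linarith
    have : 2 * (1 / (2 * L)) * ‖gradient f u - gradient f w‖ ^ 2
        ≤ ⟪gradient f u - gradient f w, u - w⟫ := by nlinarith [k1, k2, e5]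
    have he : 2 * (1 / (2 * L)) = L⁻¹ := by field_simp
    linarith [this, he ▸ this]
  -- conclude
  set g := gradient f x
  set g' := gradient f x'
  set d := g - g' with hd
  have hxx : x - x' = γ • g := by rw [hx']; abel
  have hcc := coco x x'
  rw [hxx, real_inner_smul_right] at hcc
  -- ⟪d, g⟫ ≥ ‖d‖²/(γL)
  have hdg : L⁻¹ * ‖d‖ ^ 2 ≤ γ * ⟪d, g⟫ := hcc
  have hnorm : ‖g‖ ^ 2 - ‖g'‖ ^ 2 = 2 * ⟪d, g⟫ - ‖d‖ ^ 2 := by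
    have : g' = g - d := by rw [hd]; abel
    rw [this, ← real_inner_self_eq_norm_sq, ← real_inner_self_eq_norm_sq,
      ← real_inner_self_eq_norm_sq]
    simp only [inner_sub_left, inner_sub_right, real_inner_comm d g]
    ring
  rw [ge_iff_le, hnorm]
  rw [div_mul_eq_mul_div, div_le_iff₀ (by positivity)]
  have h9 : ‖d‖ ^ 2 ≤ γ * L * ⟪d, g⟫ := by
    have h10 := mul_le_mul_of_nonneg_left hdg hL.le
    have h11 : L * (L⁻¹ * ‖d‖ ^ 2) = ‖d‖ ^ 2 := by field_simp
    nlinarith [h10]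
  nlinarith [h9]
end

section
/- Let L > 0 and μ < L, set κ := μ/L, and let f : E → ℝ be a differentiable function on a real inner product space E with f ∈ F_{μ,L}. Let γ > 0 with γL ∈ [1, 2/(1 + max{κ,0})), and let x' = x − γ∇f(x) be one gradient-descent step from a point x ∈ E. Then f(x) − f(x') ≥ (γ·[(2 − γL)(2 − γμ) − 1]/(2 − γL − γμ)) · ‖∇f(x)‖²/2 + (γ/(2 − γL − γμ)) · ‖∇f(x')‖²/2, where γμ := γ·μ and γL := γ·L. -/
open Set InnerProductSpace RealInnerProductSpace

/-- First-order lower bound for a convex differentiable function. -/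
lemma first_order_aux {E : Type*} [NormedAddCommGroup E] [InnerProductSpace ℝ E]
    {G : E → ℝ} {G' : E → E →L[ℝ] ℝ} (hconv : ConvexOn ℝ Set.univ G)
    (hG : ∀ z, HasFDerivAt G (G' z) z) (u w : E) :
    G u + G' u (w - u) ≤ G w := by
  set φ : ℝ → ℝ := fun t => G (u + t • (w - u)) with hφ
  have hφc : ConvexOn ℝ Set.univ φ := by
    have h := hconv.comp_affineMap (AffineMap.lineMap u w)
    have huniv : ((AffineMap.lineMap u w : ℝ →ᵃ[ℝ] E)) ⁻¹' Set.univ = Set.univ := by simp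
    rw [huniv] at h
    have hfun : φ = G ∘ AffineMap.lineMap u w := by
      funext t
      simp [hφ, AffineMap.lineMap_apply, add_comm]
    rw [hfun]; exact h
  have h1 : HasDerivAt (fun t : ℝ => u + t • (w - u)) (w - u) 0 := by
    simpa using ((hasDerivAt_id (0 : ℝ)).smul_const (w - u)).const_add u
  have hd : HasDerivAt φ (G' u (w - u)) 0 := by
    have h2 := (hG (u + (0 : ℝ) • (w - u))).comp_hasDerivAt 0 h1
    simpa [hφ, Function.comp_def] using h2
  have hs := hφc.le_slope_of_hasDerivAt (Set.mem_univ (0 : ℝ)) (Set.mem_univ 1)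
    one_pos hd
  rw [slope_def_field] at hs
  have h0 : φ 0 = G u := by simp [hφ]
  have h1' : φ 1 = G w := by simp [hφ]
  rw [h0, h1'] at hs
  have : G' u (w - u) ≤ G w - G u := by
    simpa using hs
  linarith

/-- Fréchet derivative of the squared norm. -/
lemma hasFDerivAt_normSq_aux {E : Type*} [NormedAddCommGroup E] [InnerProductSpace ℝ E]
    [CompleteSpace E] (u : E) :
    HasFDerivAt (fun z : E => ‖z‖ ^ 2) ((InnerProductSpace.toDual ℝ E) ((2 : ℝ) • u)) u := by
  have h := (hasFDerivAt_id (𝕜 := ℝ) u).inner ℝ (hasFDerivAt_id u)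
  simp only [id_eq] at h
  have hfun : (fun t : E => (inner ℝ t t : ℝ)) = fun z : E => ‖z‖ ^ 2 := by
    funext z; exact real_inner_self_eq_norm_sq z
  rw [hfun] at h
  refine h.congr_fderiv ?_
  ext v
  simp [fderivInnerCLM_apply, InnerProductSpace.toDual_apply_apply, real_inner_smul_left,
    real_inner_comm]
  ring

/-- Scalar combination step. -/
lemma combine_aux (L μ γ D a b c : ℝ) (hs : 0 < L - μ)
    (hA : (1 - μ * γ) ^ 2 * a + b - 2 * ((1 - μ * γ) * c) ≤
      2 * (L - μ) * (D - γ * c - μ / 2 * (γ ^ 2 * a)))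
    (hB : (1 - μ * γ) ^ 2 * a + b - 2 * ((1 - μ * γ) * c) ≤
      2 * (L - μ) * (-D + γ * a - μ / 2 * (γ ^ 2 * a)))
    (hp : 0 ≤ γ * (L - μ) + (2 - γ * L - γ * μ))
    (hq : 0 ≤ γ * (L - μ) - (2 - γ * L - γ * μ)) :
    γ * ((2 - γ * L) * (2 - γ * μ) - 1) * (a / 2) + γ * (b / 2) ≤
      D * (2 - γ * L - γ * μ) := by
  have hP1 := mul_nonneg hp (sub_nonneg.2 hA)
  have hP2 := mul_nonneg hq (sub_nonneg.2 hB)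
  have key : 0 ≤ 4 * (L - μ) * (D * (2 - γ * L - γ * μ) -
      (γ * ((2 - γ * L) * (2 - γ * μ) - 1) * (a / 2) + γ * (b / 2))) := by
    have hid : 4 * (L - μ) * (D * (2 - γ * L - γ * μ) -
        (γ * ((2 - γ * L) * (2 - γ * μ) - 1) * (a / 2) + γ * (b / 2))) =
        (γ * (L - μ) + (2 - γ * L - γ * μ)) *
          (2 * (L - μ) * (D - γ * c - μ / 2 * (γ ^ 2 * a)) -
            ((1 - μ * γ) ^ 2 * a + b - 2 * ((1 - μ * γ) * c))) +
        (γ * (L - μ) - (2 - γ * L - γ * μ)) *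
          (2 * (L - μ) * (-D + γ * a - μ / 2 * (γ ^ 2 * a)) -
            ((1 - μ * γ) ^ 2 * a + b - 2 * ((1 - μ * γ) * c))) := by
      ring
    rw [hid]
    exact add_nonneg hP1 hP2
  nlinarith [key, hs]

set_option maxHeartbeats 1000000 in
/-- **One-step sufficient decrease with long stepsizes
(Lemma 4 / `lemma:sufficient_decrease_h_geq_1`, inequality (N4SD)).**
For `f ∈ F_{μ,L}` with `μ < L`, `L > 0`, `κ = μ/L`, `γ > 0` with
`γL ∈ [1, 2/(1+[κ]₊))`, and one step `x' = x − γ∇f(x)`: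
`f(x) − f(x') ≥ (γ[(2−γL)(2−γμ)−1]/(2−γL−γμ))·‖∇f(x)‖²/2 +
 (γ/(2−γL−γμ))·‖∇f(x')‖²/2`. -/
theorem one_step_decrease_long_stepsize
    {E : Type*} [NormedAddCommGroup E] [InnerProductSpace ℝ E] [CompleteSpace E]
    (L μ : ℝ) (hL : 0 < L) (hμL : μ < L) (κ : ℝ) (hκ : κ = μ / L)
    (f : E → ℝ) (hdiff : Differentiable ℝ f)
    (hsmooth : ConvexOn ℝ Set.univ (fun z => L / 2 * ‖z‖ ^ 2 - f z))
    (hcurv : ConvexOn ℝ Set.univ (fun z => f z - μ / 2 * ‖z‖ ^ 2))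
    (γ : ℝ) (hγ : 0 < γ) (hγL : 1 ≤ γ * L) (hγL' : γ * L < 2 / (1 + max κ 0))
    (x x' : E) (hx' : x' = x - γ • gradient f x) :
    f x - f x' ≥
      γ * ((2 - γ * L) * (2 - γ * μ) - 1) / (2 - γ * L - γ * μ) *
          (‖gradient f x‖ ^ 2 / 2) +
        γ / (2 - γ * L - γ * μ) * (‖gradient f x'‖ ^ 2 / 2) := by
  have hs : (0 : ℝ) < L - μ := sub_pos.2 hμL
  have hfd : ∀ u : E, HasFDerivAt f ((InnerProductSpace.toDual ℝ E) (gradient f u)) u :=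
    fun u => hasGradientAt_iff_hasFDerivAt.mp (hdiff u).hasGradientAt
  -- descent (upper) inequality from L-smoothness
  have hC2 : ∀ u w : E, f w ≤ f u + ⟪gradient f u, w - u⟫ + L / 2 * ‖w - u‖ ^ 2 := by
    intro u w
    have hG : ∀ z : E, HasFDerivAt (fun z : E => L / 2 * ‖z‖ ^ 2 - f z)
        ((InnerProductSpace.toDual ℝ E) (L • z - gradient f z)) z := by
      intro z
      have h := ((hasFDerivAt_normSq_aux z).const_mul (L / 2)).sub (hfd z)
      refine h.congr_fderiv ?_
      ext v
      simp [InnerProductSpace.toDual_apply_apply, inner_sub_left, real_inner_smul_left]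
      ring
    have h := first_order_aux hsmooth hG u w
    simp only [InnerProductSpace.toDual_apply_apply, inner_sub_left, inner_sub_right,
      real_inner_smul_left, real_inner_self_eq_norm_sq] at h
    have hexp : ‖w - u‖ ^ 2 = ‖w‖ ^ 2 - 2 * ⟪w, u⟫ + ‖u‖ ^ 2 := norm_sub_sq_real w u
    have hcm : ⟪u, w⟫ = ⟪w, u⟫ := real_inner_comm w u
    simp only [inner_sub_right] at *
    nlinarith [h, hexp, hcm]
  -- lower inequality from μ-strong convexity
  have hC1 : ∀ u w : E, f u + ⟪gradient f u, w - u⟫ + μ / 2 * ‖w - u‖ ^ 2 ≤ f w := by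
    intro u w
    have hG : ∀ z : E, HasFDerivAt (fun z : E => f z - μ / 2 * ‖z‖ ^ 2)
        ((InnerProductSpace.toDual ℝ E) (gradient f z - μ • z)) z := by
      intro z
      have h := (hfd z).sub ((hasFDerivAt_normSq_aux z).const_mul (μ / 2))
      refine h.congr_fderiv ?_
      ext v
      simp [InnerProductSpace.toDual_apply_apply, inner_sub_left, real_inner_smul_left]
      ring
    have h := first_order_aux hcurv hG u w
    simp only [InnerProductSpace.toDual_apply_apply, inner_sub_left, inner_sub_right,
      real_inner_smul_left, real_inner_self_eq_norm_sq] at h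
    have hexp : ‖w - u‖ ^ 2 = ‖w‖ ^ 2 - 2 * ⟪w, u⟫ + ‖u‖ ^ 2 := norm_sub_sq_real w u
    have hcm : ⟪u, w⟫ = ⟪w, u⟫ := real_inner_comm w u
    simp only [inner_sub_right]
    nlinarith [h, hexp, hcm]
  -- co-coercivity of f - μ/2‖·‖²
  have coco : ∀ u v : E, ‖gradient f u - gradient f v - μ • (u - v)‖ ^ 2 ≤
      2 * (L - μ) * (f u - f v - ⟪gradient f v, u - v⟫ - μ / 2 * ‖u - v‖ ^ 2) := by
    intro u v
    set t : ℝ := 1 / (L - μ) with ht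
    have hst : (L - μ) * t = 1 := by
      rw [ht]; field_simp
    set d : E := gradient f u - gradient f v - μ • (u - v) with hd
    set w : E := u - t • d with hw
    have h1 := hC1 v w
    have h2 := hC2 u w
    have e1 : ⟪gradient f v, w - v⟫ = ⟪gradient f v, u - v⟫ - t * ⟪gradient f v, d⟫ := by
      have : w - v = (u - v) - t • d := by rw [hw]; abel
      rw [this, inner_sub_right, real_inner_smul_right]
    have e2 : ⟪gradient f u, w - u⟫ = -(t * ⟪gradient f u, d⟫) := by
      have : w - u = -(t • d) := by rw [hw]; abel
      rw [this, inner_neg_right, real_inner_smul_right]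
    have e3 : ‖w - u‖ ^ 2 = t ^ 2 * ‖d‖ ^ 2 := by
      have : w - u = -(t • d) := by rw [hw]; abel
      rw [this, norm_neg, norm_smul]
      simp [mul_pow, sq_abs]
    have e4 : ‖w - v‖ ^ 2 = ‖u - v‖ ^ 2 - 2 * (t * ⟪u - v, d⟫) + t ^ 2 * ‖d‖ ^ 2 := by
      have hwv : w - v = (u - v) - t • d := by rw [hw]; abel
      rw [hwv, norm_sub_sq_real, real_inner_smul_right, norm_smul]
      simp [mul_pow, sq_abs]
    have e5 : ‖d‖ ^ 2 = ⟪gradient f u, d⟫ - ⟪gradient f v, d⟫ - μ * ⟪u - v, d⟫ := by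
      conv_lhs => rw [← real_inner_self_eq_norm_sq]
      conv_lhs => rw [hd]
      rw [inner_sub_left, inner_sub_left, real_inner_smul_left]
    have e5' : t * ‖d‖ ^ 2 =
        t * ⟪gradient f u, d⟫ - t * ⟪gradient f v, d⟫ - t * (μ * ⟪u - v, d⟫) := by
      rw [e5]; ring
    have hst2 : (L - μ) * (t ^ 2 * ‖d‖ ^ 2) = t * ‖d‖ ^ 2 := by
      calc (L - μ) * (t ^ 2 * ‖d‖ ^ 2) = ((L - μ) * t) * (t * ‖d‖ ^ 2) := by ring
        _ = t * ‖d‖ ^ 2 := by rw [hst, one_mul]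
    rw [e1, e4] at h1
    rw [e2, e3] at h2
    -- key : t/2 * ‖d‖^2 ≤ f u - f v - ⟪∇f v, u-v⟫ - μ/2‖u-v‖²
    -- then multiply by 2(L-μ) and use hst
    have key : t / 2 * ‖d‖ ^ 2 ≤
        f u - f v - ⟪gradient f v, u - v⟫ - μ / 2 * ‖u - v‖ ^ 2 := by
      linarith [h1, h2, e5', hst2]
    have hmul := mul_le_mul_of_nonneg_left key (by linarith : (0:ℝ) ≤ 2 * (L - μ))
    calc ‖d‖ ^ 2 = ((L - μ) * t) * ‖d‖ ^ 2 := by rw [hst, one_mul]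
      _ = 2 * (L - μ) * (t / 2 * ‖d‖ ^ 2) := by ring
      _ ≤ _ := hmul
  set g : E := gradient f x with hgdef
  set g' : E := gradient f x' with hg'def
  have hxx' : x - x' = γ • g := by rw [hx']; abel
  have hx'x : x' - x = -(γ • g) := by rw [hx']; abel
  have hA := coco x x'
  have hB := coco x' x
  rw [hxx'] at hA
  rw [hx'x] at hB
  have e_d : g - g' - μ • (γ • g) = (1 - μ * γ) • g - g' := by
    rw [smul_smul, sub_smul, one_smul]; abel
  have e_d2 : g' - g - μ • -(γ • g) = -((1 - μ * γ) • g - g') := by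
    rw [smul_neg, smul_smul, sub_smul, one_smul]; abel
  have e_dd : ‖(1 - μ * γ) • g - g'‖ ^ 2 =
      (1 - μ * γ) ^ 2 * ‖g‖ ^ 2 + ‖g'‖ ^ 2 - 2 * ((1 - μ * γ) * ⟪g, g'⟫) := by
    rw [norm_sub_sq_real, real_inner_smul_left, norm_smul]
    simp [mul_pow, sq_abs]
    ring
  have e_in : ⟪g', γ • g⟫ = γ * ⟪g, g'⟫ := by
    rw [real_inner_smul_right, real_inner_comm]
  have e_in2 : ⟪g, -(γ • g)⟫ = -(γ * ‖g‖ ^ 2) := by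
    rw [inner_neg_right, real_inner_smul_right, real_inner_self_eq_norm_sq]
  have e_n : ‖γ • g‖ ^ 2 = γ ^ 2 * ‖g‖ ^ 2 := by
    rw [norm_smul]; simp [mul_pow, sq_abs]
  have e_n2 : ‖-(γ • g)‖ ^ 2 = γ ^ 2 * ‖g‖ ^ 2 := by
    rw [norm_neg]; exact e_n
  rw [e_d, e_dd, e_in, e_n] at hA
  rw [e_d2, norm_neg, e_dd, e_in2, e_n2] at hB
  -- positivity of the denominator
  have hδ : (0 : ℝ) < 2 - γ * L - γ * μ := by
    rcases le_or_gt μ 0 with hμ | hμ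
    · have hκ0 : κ ≤ 0 := by
        rw [hκ]; exact div_nonpos_of_nonpos_of_nonneg hμ hL.le
      have hm : max κ 0 = 0 := max_eq_right hκ0
      rw [hm] at hγL'
      norm_num at hγL'
      have hγμ : γ * μ ≤ 0 := mul_nonpos_iff.mpr (Or.inl ⟨hγ.le, hμ⟩)
      linarith
    · have hκ0 : 0 ≤ κ := by rw [hκ]; positivity
      have hm : max κ 0 = κ := max_eq_left hκ0
      rw [hm] at hγL'
      have h1κ : (0 : ℝ) < 1 + κ := by linarith
      have h2 : γ * L * (1 + κ) < 2 := (lt_div_iff₀ h1κ).mp hγL'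
      have h3 : γ * L * (1 + κ) = γ * L + γ * μ := by
        rw [hκ]; field_simp
      linarith
  have hp : (0 : ℝ) ≤ γ * (L - μ) + (2 - γ * L - γ * μ) := by linarith
  have hq : (0 : ℝ) ≤ γ * (L - μ) - (2 - γ * L - γ * μ) := by linarith
  have hP1 := mul_nonneg hp (sub_nonneg.2 hA)
  have hP2 := mul_nonneg hq (sub_nonneg.2 hB)
  rw [ge_iff_le, div_mul_eq_mul_div, div_mul_eq_mul_div, ← add_div, div_le_iff₀ hδ]
  exact combine_aux L μ γ (f x - f x') (‖g‖ ^ 2) (‖g'‖ ^ 2) ⟪g, g'⟫ hs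
    (by linarith [hA]) (by linarith [hB]) hp hq
end
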